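/- arXiv:2301.03279 — 10 statements merged into one kernel-verified Lean document; each statement's English description precedes it below -/
import Mathlib

section
/- For all integers k ≥ 2, λ ≥ 1 and m > k, for every deterministic distributed mechanism f_over-of-f_in whose (possibly cardinal) in-district rule f_in is unanimous and whose over-districts rule f_over always outputs one of the district representatives, and for every real c < (k-1)·m/2, there exists a unit-sum instance with m alternatives and k symmetric districts of λ agents each on which max_{a∈A} SW(a) / SW(winner) > c. In particular, the distortion of every such mechanism is Ω(km). -/
/-
STATEMENT 0:
For all integers k ≥ 2, λ ≥ 1 and m > k, for every deterministic distributed mechanism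
f_over-of-f_in whose (possibly cardinal) in-district rule f_in is unanimous and whose
over-districts rule f_over always outputs one of the district representatives, and for every
real c < (k-1)·m/2, there exists a unit-sum instance with m alternatives and k symmetric
districts of λ agents each on which max_{a∈A} SW(a) / SW(winner) > c.
-/
set_option maxHeartbeats 1000000 in
theorem stmt0
    (k lam m : ℕ) (hk : 2 ≤ k) (hlam : 1 ≤ lam) (hm : k < m)
    (fin : (Fin lam → Fin m → ℝ) → Fin m)
    (fover : (Fin k → Fin m) → Fin m)
    (hfin_unanimous : ∀ (P : Fin lam → Fin m → ℝ) (a : Fin m),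
      (∀ (i : Fin lam) (b : Fin m), b ≠ a → P i b < P i a) → fin P = a)
    (hfover_rep : ∀ reps : Fin k → Fin m, ∃ d : Fin k, fover reps = reps d)
    (c : ℝ) (hc : c < ((k : ℝ) - 1) * m / 2) :
    ∃ v : Fin k → Fin lam → Fin m → ℝ,
      (∀ d i a, 0 ≤ v d i a) ∧
      (∀ d i, ∑ a, v d i a = 1) ∧
      ∃ a : Fin m,
        (∀ b : Fin m, (∑ d, ∑ i, v d i b) ≤ (∑ d, ∑ i, v d i a)) ∧
        c < (∑ d, ∑ i, v d i a) /
            (∑ d, ∑ i, v d i (fover fun d' => fin (v d'))) := by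
  -- notation
  set M : ℝ := (m : ℝ) with hMdef
  set K : ℝ := (k : ℝ) with hKdef
  have hM3 : (3 : ℝ) ≤ M := by
    rw [hMdef]; exact_mod_cast (by omega : 3 ≤ m)
  have hK2 : (2 : ℝ) ≤ K := by
    rw [hKdef]; exact_mod_cast hk
  have hMpos : (0 : ℝ) < M := by linarith
  have hM2 : (0 : ℝ) < M - 2 := by linarith
  have hK1 : (0 : ℝ) < K - 1 := by linarith
  have hdenpos : (0 : ℝ) < M * ((K - 1) * (2 * M + 1)) := by positivity
  set e : ℝ := 1 / (M * ((K - 1) * (2 * M + 1))) with hedef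
  have he : 0 < e := by positivity
  have hprod : e * (M * ((K - 1) * (2 * M + 1))) = 1 := by
    rw [hedef]; field_simp
  have hX7 : (7 : ℝ) ≤ (K - 1) * (2 * M + 1) := by
    nlinarith [mul_nonneg (by linarith : (0:ℝ) ≤ K - 2) (by linarith : (0:ℝ) ≤ 2 * M + 1)]
  have hden21 : (21 : ℝ) ≤ M * ((K - 1) * (2 * M + 1)) := by
    nlinarith [mul_nonneg (by linarith : (0:ℝ) ≤ M - 3) (by linarith : (0:ℝ) ≤ (K - 1) * (2 * M + 1) - 7)]
  have he21 : 21 * e ≤ 1 := by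
    calc 21 * e ≤ (M * ((K - 1) * (2 * M + 1))) * e := by
          apply mul_le_mul_of_nonneg_right hden21 he.le
      _ = 1 := by rw [mul_comm]; exact hprod
  have h2M : 2 / M ≤ 2 / 3 := by
    rw [div_le_div_iff₀ hMpos (by norm_num)]; linarith
  set z : ℝ := (1 - 2 / M - 6 * e) / (M - 2) with hzdef
  have hz0 : 0 ≤ z := by
    apply div_nonneg _ hM2.le
    linarith
  have hz1 : z ≤ 1 / M := by
    rw [hzdef, div_le_div_iff₀ hM2 hMpos]
    have h1 : (2 / M) * M = 2 := by field_simp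
    nlinarith [mul_nonneg (mul_nonneg he.le hMpos.le) (by norm_num : (0:ℝ) ≤ 6)]
  have hMinv : M * (1 / M) = 1 := by field_simp
  -- alternatives
  have hm' : k ≤ m := hm.le
  set emb : Fin k → Fin m := fun d => Fin.castLE hm' d with hembdef
  have hembinj : Function.Injective emb := Fin.castLE_injective hm'
  set astar : Fin m := ⟨k, hm⟩ with hastardef
  have hne : ∀ d : Fin k, emb d ≠ astar := by
    intro d h
    have : (emb d).val = k := by rw [h]
    have : (d : ℕ) = k := this
    omega
  obtain ⟨d₀, hd₀⟩ := hfover_rep emb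
  set w : Fin m := emb d₀ with hwdef
  -- valuations
  set val : Fin k → Fin m → ℝ := fun d b =>
    if d = d₀ then
      z + (if b = w then 1 / M + 4 * e - z else 0) + (if b = astar then 1 / M + 2 * e - z else 0)
    else
      (if b = emb d then 1 / 2 + e else 0) + (if b = astar then 1 / 2 - e else 0) with hvaldef
  -- local facts about val
  have hwa : w ≠ astar := hne d₀
  have hval_d0 : ∀ b, val d₀ b
      = z + (if b = w then 1 / M + 4 * e - z else 0) + (if b = astar then 1 / M + 2 * e - z else 0) :=
    fun b => if_pos rfl
  have hval_ne : ∀ d, d ≠ d₀ → ∀ b, val d b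
      = (if b = emb d then 1 / 2 + e else 0) + (if b = astar then 1 / 2 - e else 0) :=
    fun d hd b => if_neg hd
  have hMinvpos : (0 : ℝ) < 1 / M := by positivity
  have hval_nonneg : ∀ d b, 0 ≤ val d b := by
    intro d b
    rw [hvaldef]
    dsimp only
    split_ifs <;> linarith
  have hval_sum : ∀ d, ∑ b, val d b = 1 := by
    intro d
    by_cases hd : d = d₀
    · subst hd
      rw [Finset.sum_congr rfl fun b _ => hval_d0 b]
      rw [Finset.sum_add_distrib, Finset.sum_add_distrib]
      simp only [Finset.sum_ite_eq', Finset.mem_univ, if_pos, Finset.sum_const,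
        Finset.card_univ, Fintype.card_fin, nsmul_eq_mul]
      rw [hzdef]
      field_simp
      ring
    · rw [Finset.sum_congr rfl fun b _ => hval_ne d hd b]
      rw [Finset.sum_add_distrib]
      simp only [Finset.sum_ite_eq', Finset.mem_univ, if_pos]
      norm_num
  -- representatives
  have htop : ∀ d, ∀ (i : Fin lam) (b : Fin m), b ≠ emb d → val d b < val d (emb d) := by
    intro d i b hb
    by_cases hd : d = d₀
    · subst hd
      rw [hval_d0, hval_d0]
      rw [if_pos rfl, if_neg hwa]
      rw [if_neg hb]
      by_cases hba : b = astar
      · rw [if_pos hba]; linarith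
      · rw [if_neg hba]; linarith
    · rw [hval_ne d hd, hval_ne d hd]
      rw [if_pos rfl, if_neg (hne d)]
      rw [if_neg hb]
      by_cases hba : b = astar
      · rw [if_pos hba]; linarith
      · rw [if_neg hba]; linarith
  have hrep : ∀ d : Fin k, fin (fun _ : Fin lam => val d) = emb d := by
    intro d
    exact hfin_unanimous _ _ (htop d)
  -- sum splitting helper
  have hsplit : ∀ g h : Fin k → ℝ,
      ∑ d, (if d = d₀ then g d else h d) = g d₀ + ((∑ d, h d) - h d₀) := by
    intro g h
    have hrw : ∀ d, (if d = d₀ then g d else h d)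
        = h d + (if d = d₀ then g d - h d else 0) := by
      intro d; split <;> ring
    rw [Finset.sum_congr rfl fun d _ => hrw d, Finset.sum_add_distrib]
    simp [Finset.sum_ite_eq']
    ring
  set Sb : Fin m → ℝ := fun b => ∑ d, val d b with hSbdef
  have hSw : Sb w = 1 / M + 4 * e := by
    rw [hSbdef]
    dsimp only
    rw [hvaldef]
    dsimp only
    rw [hsplit]
    rw [if_pos rfl, if_neg hwa]
    have h1 : ∀ d : Fin k, ((if w = emb d then (1/2 + e : ℝ) else 0) + (if w = astar then 1/2 - e else 0))
        = if d₀ = d then 1/2 + e else 0 := by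
      intro d
      rw [if_neg hwa, add_zero, hwdef]
      congr 1
      simp [hembinj.eq_iff]
    rw [Finset.sum_congr rfl fun d _ => h1 d, Finset.sum_ite_eq]
    rw [h1 d₀]
    simp
  have hSa : Sb astar = (K - 1) * (1 / 2 - e) + (1 / M + 2 * e) := by
    rw [hSbdef]
    dsimp only
    rw [hvaldef]
    dsimp only
    rw [hsplit]
    rw [if_neg (Ne.symm hwa), if_pos rfl]
    have h1 : ∀ d : Fin k, ((if astar = emb d then (1/2 + e : ℝ) else 0) + (if astar = astar then 1/2 - e else 0))
        = 1/2 - e := by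
      intro d
      rw [if_neg (Ne.symm (hne d)), if_pos rfl, zero_add]
    rw [Finset.sum_congr rfl fun d _ => h1 d, h1 d₀]
    simp [Finset.card_univ]
    ring
  have hSother : ∀ b : Fin m, b ≠ w → b ≠ astar → Sb b ≤ z + (1 / 2 + e) := by
    intro b hbw hba
    rw [hSbdef]
    dsimp only
    rw [hvaldef]
    dsimp only
    rw [hsplit]
    rw [if_neg hbw, if_neg hba]
    have h1 : ∀ d : Fin k, ((if b = emb d then (1/2 + e : ℝ) else 0) + (if b = astar then 1/2 - e else 0))
        = if b = emb d then 1/2 + e else 0 := by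
      intro d; rw [if_neg hba, add_zero]
    rw [Finset.sum_congr rfl fun d _ => h1 d, h1 d₀]
    rw [if_neg hbw]
    have h2 : (∑ d, if b = emb d then (1/2 + e : ℝ) else 0) ≤ 1/2 + e := by
      by_cases hb : ∃ d1, b = emb d1
      · obtain ⟨d1, rfl⟩ := hb
        have h3 : ∀ d : Fin k, (if emb d1 = emb d then (1/2 + e : ℝ) else 0)
            = if d1 = d then 1/2 + e else 0 := by
          intro d; congr 1; simp [hembinj.eq_iff]
        rw [Finset.sum_congr rfl fun d _ => h3 d, Finset.sum_ite_eq]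
        simp
      · push_neg at hb
        rw [Finset.sum_eq_zero fun d _ => if_neg (hb d)]
        linarith
    linarith
  -- main instance
  refine ⟨fun d _ b => val d b, fun d i a => hval_nonneg d a, fun d i => hval_sum d, astar, ?_, ?_⟩
  · intro b
    have hsum : ∀ b : Fin m, (∑ d, ∑ _i : Fin lam, val d b) = (lam : ℝ) * Sb b := by
      intro b
      rw [hSbdef]
      dsimp only
      rw [Finset.mul_sum]
      apply Finset.sum_congr rfl
      intro d _
      rw [Finset.sum_const, Finset.card_univ, Fintype.card_fin, nsmul_eq_mul]
    rw [hsum, hsum]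
    apply mul_le_mul_of_nonneg_left _ (by positivity)
    by_cases hbw : b = w
    · rw [hbw, hSw, hSa]
      nlinarith [mul_nonneg (by linarith : (0:ℝ) ≤ K - 2) (by linarith : (0:ℝ) ≤ 1/2 - e)]
    · by_cases hba : b = astar
      · rw [hba]
      · have := hSother b hbw hba
        rw [hSa]
        nlinarith [mul_nonneg (by linarith : (0:ℝ) ≤ K - 2) (by linarith : (0:ℝ) ≤ 1/2 - e)]
  · have hwin : (fover fun d' => fin ((fun d _ b => val d b) d')) = w := by
      have : (fun d' => fin ((fun (d : Fin k) (_ : Fin lam) (b : Fin m) => val d b) d')) = emb := by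
        funext d'
        exact hrep d'
      rw [this, hd₀]
    rw [hwin]
    have hsum : ∀ b : Fin m, (∑ d, ∑ _i : Fin lam, val d b) = (lam : ℝ) * Sb b := by
      intro b
      rw [hSbdef]
      dsimp only
      rw [Finset.mul_sum]
      apply Finset.sum_congr rfl
      intro d _
      rw [Finset.sum_const, Finset.card_univ, Fintype.card_fin, nsmul_eq_mul]
    rw [hsum, hsum]
    have hlampos : (0 : ℝ) < (lam : ℝ) := by
      have : (1:ℕ) ≤ lam := hlam
      exact_mod_cast Nat.lt_of_lt_of_le Nat.zero_lt_one this
    rw [mul_div_mul_left _ _ (ne_of_gt hlampos)]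
    have hD : (0 : ℝ) < Sb w := by rw [hSw]; positivity
    rw [lt_div_iff₀ hD]
    have hkey : ((K - 1) * M / 2) * Sb w < Sb astar := by
      rw [hSw, hSa]
      have expand : ((K - 1) * M / 2) * (1 / M + 4 * e)
          = (K - 1) / 2 * (M * (1/M)) + 2 * (K - 1) * M * e := by ring
      rw [expand, hMinv]
      nlinarith [hprod, he]
    calc c * Sb w < ((K - 1) * M / 2) * Sb w := by
          apply mul_lt_mul_of_pos_right _ hD
          exact hc
      _ < Sb astar := hkey
end

section
/- Let f_in be a deterministic ordinal in-district rule and suppose that on some district ordinal profile P (a profile of rankings for λ agents over m alternatives), f_in selects an alternative x that is not ranked first by any agent in P. Then for every deterministic distributed mechanism using f_in and any over-districts rule f_over that outputs one of the district representatives, and for every M > 0, there exists a unit-sum instance (consisting of k identical copies of the district P, with valuations consistent with the rankings in P) on which the winner is x, SW(x) = 0, and max_{a∈A} SW(a) > 0; hence the distortion of the mechanism is infinite. -/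
/-
STATEMENT 1:
Let f_in be a deterministic ordinal in-district rule and suppose that on some district ordinal
profile P (a profile of rankings for λ agents over m alternatives), f_in selects an alternative
x that is not ranked first by any agent in P. Then for every deterministic distributed mechanism
using f_in and any over-districts rule f_over that outputs one of the district representatives,
and for every M > 0, there exists a unit-sum instance (consisting of k identical copies of the
district P, with valuations consistent with the rankings in P) on which the winner is x,
SW(x) = 0, and max_{a∈A} SW(a) > 0; hence the distortion of the mechanism is infinite.

Rankings are modelled as position functions: `P i : Fin m ≃ Fin m`, where `P i a` is the
position of alternative `a` in agent `i`'s ranking (smaller = more preferred).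
-/
theorem stmt1
    (k lam m : ℕ) (hk : 1 ≤ k) (hlam : 1 ≤ lam) (hm : 2 ≤ m)
    (fin : (Fin lam → (Fin m ≃ Fin m)) → Fin m)
    (fover : (Fin k → Fin m) → Fin m)
    (hfover_rep : ∀ reps : Fin k → Fin m, ∃ d : Fin k, fover reps = reps d)
    (P : Fin lam → (Fin m ≃ Fin m)) (x : Fin m)
    (hx : fin P = x)
    (hnotop : ∀ i : Fin lam, ∃ b : Fin m, P i b < P i x)
    (M : ℝ) (hM : 0 < M) :
    ∃ u : Fin lam → Fin m → ℝ,
      (∀ i a, 0 ≤ u i a) ∧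
      (∀ i, ∑ a, u i a = 1) ∧
      (∀ (i : Fin lam) (a b : Fin m), P i a < P i b → u i b ≤ u i a) ∧
      fover (fun _ : Fin k => fin P) = x ∧
      (∑ _d : Fin k, ∑ i, u i x) = 0 ∧
      (∃ a : Fin m, 0 < ∑ _d : Fin k, ∑ i, u i a) := by
  classical
  haveI : NeZero m := ⟨by omega⟩
  have hnn : ∀ (i : Fin lam) (a : Fin m), (0:ℝ) ≤ if P i a = 0 then 1 else 0 := by
    intro i a; split <;> norm_num
  refine ⟨fun i a => if P i a = 0 then 1 else 0, hnn, ?_, ?_, ?_, ?_, ?_⟩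
  · intro i
    rw [Finset.sum_eq_single ((P i).symm 0)]
    · simp
    · intro b _ hb
      show (if P i b = 0 then (1:ℝ) else 0) = 0
      rw [if_neg]
      intro h
      exact hb (by simpa using congrArg (P i).symm h)
    · simp
  · intro i a b hab
    have : ¬ P i b = 0 := by
      intro h; rw [h] at hab; exact absurd hab (by simp)
    show (if P i b = 0 then (1:ℝ) else 0) ≤ _
    rw [if_neg this]
    exact hnn i a
  · obtain ⟨d, hd⟩ := hfover_rep (fun _ => fin P)
    rw [hd, hx]
  · apply Finset.sum_eq_zero
    intro d _
    apply Finset.sum_eq_zero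
    intro i _
    obtain ⟨b, hb⟩ := hnotop i
    have : ¬ P i x = 0 := by
      intro h; rw [h] at hb; exact absurd hb (by simp)
    show (if P i x = 0 then (1:ℝ) else 0) = 0
    rw [if_neg this]
  · have h0 : 0 < lam := hlam
    refine ⟨(P ⟨0, h0⟩).symm 0, ?_⟩
    apply Finset.sum_pos
    · intro d _
      apply Finset.sum_pos'
      · intro i _; exact hnn i _
      · exact ⟨⟨0, h0⟩, Finset.mem_univ _, by simp⟩
    · exact ⟨⟨0, hk⟩, Finset.mem_univ _⟩
end

section
/- Let k ≥ 2, let m be even with 2λ/m a positive integer, and let M be a deterministic ordinal distributed mechanism on instances with k symmetric districts of λ agents and alternative set A of size m. Let y_1, …, y_k ∈ A be distinct and let x ∈ A \ {y_1, …, y_k}. Suppose the over-districts rule of M selects y_1 whenever the tuple of district representatives is (y_1, …, y_k), and suppose there exists a divided district ordinal profile on which the in-district rule of M selects y_1. Then either M has infinite distortion, or there exists a unit-sum instance (consisting of that divided district together with k-1 districts in which all agents rank y_ℓ first and x second, for ℓ = 2, …, k) on which max_{a∈A} SW(a) / SW(winner) ≥ (k-1)·m²/4; in particular the distortion of M is Ω(k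 m²). -/
theorem exists_rank2 {n : ℕ} (hn : 2 ≤ n) (a c : Fin n) (hac : a ≠ c) :
    ∃ π : Fin n ≃ Fin n, π a = ⟨0, by omega⟩ ∧ π c = ⟨1, by omega⟩ := by
  set z0 : Fin n := ⟨0, by omega⟩ with hz0
  set z1 : Fin n := ⟨1, by omega⟩ with hz1
  refine ⟨(Equiv.swap a z0).trans (Equiv.swap ((Equiv.swap a z0) c) z1), ?_, ?_⟩
  · simp only [Equiv.trans_apply, Equiv.swap_apply_left]
    apply Equiv.swap_apply_of_ne_of_ne
    · intro hcon
      exact hac ((Equiv.swap a z0).injective (by rw [Equiv.swap_apply_left]; exact hcon))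
    · intro hcon
      have := congrArg Fin.val hcon
      simp [hz0, hz1] at this
  · simp only [Equiv.trans_apply, Equiv.swap_apply_left]



/-
STATEMENT 2:
Let k ≥ 2, let m be even with 2λ/m a positive integer (we write m = 2h and λ = h·s with
h ≥ 1, s ≥ 1, so that 2λ/m = s), and let M be a deterministic ordinal distributed mechanism on
instances with k symmetric districts of λ agents and alternative set A of size m.
Let y_1, …, y_k ∈ A be distinct and let x ∈ A \ {y_1, …, y_k}. Suppose the over-districts rule
of M selects y_1 whenever the tuple of district representatives is (y_1, …, y_k), and suppose
there exists a divided district ordinal profile on which the in-district rule of M selects y_1.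
Then either M has infinite distortion, or there exists a unit-sum instance (consisting of that
divided district together with k-1 districts in which all agents rank y_ℓ first and x second)
on which max_{a∈A} SW(a) / SW(winner) ≥ (k-1)·m²/4.

Rankings are modelled as position functions: `σ d i : Fin m ≃ Fin m` maps each alternative to
its position (smaller = more preferred). "Infinite distortion" is witnessed by an instance on
which the winner has zero social welfare while some alternative has positive social welfare.
-/
theorem stmt2
    (k h s : ℕ) (hk : 2 ≤ k) (hh : 1 ≤ h) (hs : 1 ≤ s)
    (fin : (Fin (h * s) → (Fin (2 * h) ≃ Fin (2 * h))) → Fin (2 * h))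
    (fover : (Fin k → Fin (2 * h)) → Fin (2 * h))
    (hfover_rep : ∀ reps, ∃ d, fover reps = reps d)
    (y : Fin k → Fin (2 * h)) (hy : Function.Injective y)
    (x : Fin (2 * h)) (hx : ∀ d, x ≠ y d)
    (hwin : fover y = y ⟨0, by omega⟩)
    -- a divided district profile Q represented by y_1:
    (Q : Fin (h * s) → (Fin (2 * h) ≃ Fin (2 * h)))
    (tops : Fin h → Fin (2 * h)) (htops : Function.Injective tops)
    (e : Fin (h * s) ≃ Fin h × Fin s)
    (hdivided : ∀ (i : Fin (h * s)) (b : Fin (2 * h)),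
        b ≠ tops (e i).1 → Q i (tops (e i).1) < Q i b)
    (hQ : fin Q = y ⟨0, by omega⟩) :
    -- either M has infinite distortion:
    (∃ (σ : Fin k → Fin (h * s) → (Fin (2 * h) ≃ Fin (2 * h)))
       (v : Fin k → Fin (h * s) → Fin (2 * h) → ℝ),
        (∀ d i a, 0 ≤ v d i a) ∧ (∀ d i, ∑ a, v d i a = 1) ∧
        (∀ d i a b, σ d i a < σ d i b → v d i b ≤ v d i a) ∧
        (∑ d, ∑ i, v d i (fover fun d' => fin (σ d'))) = 0 ∧
        (∃ a, 0 < ∑ d, ∑ i, v d i a)) ∨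
    -- or there is an instance of the described shape with distortion at least (k-1)·m²/4:
    (∃ (σ : Fin k → Fin (h * s) → (Fin (2 * h) ≃ Fin (2 * h)))
       (v : Fin k → Fin (h * s) → Fin (2 * h) → ℝ),
        σ ⟨0, by omega⟩ = Q ∧
        (∀ d : Fin k, d ≠ ⟨0, by omega⟩ → ∀ i,
          (∀ b, b ≠ y d → σ d i (y d) < σ d i b) ∧
          (∀ b, b ≠ y d → b ≠ x → σ d i x < σ d i b)) ∧
        (∀ d i a, 0 ≤ v d i a) ∧ (∀ d i, ∑ a, v d i a = 1) ∧
        (∀ d i a b, σ d i a < σ d i b → v d i b ≤ v d i a) ∧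
        ∃ a, (∀ b, (∑ d, ∑ i, v d i b) ≤ (∑ d, ∑ i, v d i a)) ∧
          ((k : ℝ) - 1) * (2 * (h : ℝ)) ^ 2 / 4 ≤
            (∑ d, ∑ i, v d i a) /
              (∑ d, ∑ i, v d i (fover fun d' => fin (σ d')))) := by
  have hm2 : 2 ≤ 2 * h := by omega
  set d0 : Fin k := ⟨0, by omega⟩ with hd0def
  have hπex : ∀ d : Fin k, ∃ π : Fin (2 * h) ≃ Fin (2 * h),
      π (y d) = ⟨0, by omega⟩ ∧ π x = ⟨1, by omega⟩ :=
    fun d => exists_rank2 hm2 (y d) x (Ne.symm (hx d))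
  choose π hπ0 hπ1 using hπex
  have hπtop : ∀ d b, b ≠ y d → π d (y d) < π d b := by
    intro d b hb
    have hne : π d b ≠ π d (y d) := fun hcon => hb ((π d).injective hcon)
    rw [hπ0] at hne ⊢
    have hv0 : (π d b).val ≠ 0 := fun hv => hne (Fin.ext hv)
    rw [Fin.lt_def]
    exact Nat.pos_of_ne_zero hv0
  have hπsecond : ∀ d b, b ≠ y d → b ≠ x → π d x < π d b := by
    intro d b hb hbx
    have hne0 : π d b ≠ π d (y d) := fun hcon => hb ((π d).injective hcon)
    have hne1 : π d b ≠ π d x := fun hcon => hbx ((π d).injective hcon)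
    rw [hπ0] at hne0
    rw [hπ1] at hne1 ⊢
    have h0 : (π d b).val ≠ 0 := fun hv => hne0 (Fin.ext hv)
    have h1 : (π d b).val ≠ 1 := fun hv => hne1 (Fin.ext hv)
    rw [Fin.lt_def]
    exact Nat.lt_of_le_of_ne (Nat.one_le_iff_ne_zero.mpr h0) (Ne.symm h1)
  -- key fact: nothing is ranked above y d, and only y d above x, in π d
  have hπlt : ∀ d (a : Fin (2 * h)), ¬ (π d a < π d (y d)) := by
    intro d a hcon
    rw [Fin.lt_def, hπ0] at hcon
    exact absurd hcon (Nat.not_lt_zero _)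
  have hπltx : ∀ d (a : Fin (2 * h)), π d a < π d x → a = y d := by
    intro d a hcon
    rw [Fin.lt_def, hπ1] at hcon
    have hval : (π d a).val = 0 := by
      have : (π d a).val < 1 := hcon
      omega
    exact (π d).injective (by rw [hπ0]; exact Fin.ext hval)
  set σ : Fin k → Fin (h * s) → (Fin (2 * h) ≃ Fin (2 * h)) :=
    fun d => if d = d0 then Q else fun _ => π d with hσdef
  have hσ0 : σ d0 = Q := if_pos rfl
  have hσd : ∀ d, d ≠ d0 → σ d = fun _ => π d := fun d hd => if_neg hd
  by_cases hA : ∀ d, d ≠ d0 → fin (σ d) = y d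
  · have hreps : (fun d' => fin (σ d')) = y := by
      funext d
      by_cases hd : d = d0
      · rw [hd, hσ0, hQ]
      · rw [hA d hd]
    have hW : (fover fun d' => fin (σ d')) = y d0 := by rw [hreps]; exact hwin
    by_cases hy0 : ∃ t, tops t = y d0
    · obtain ⟨t0, ht0⟩ := hy0
      right
      set v : Fin k → Fin (h * s) → Fin (2 * h) → ℝ := fun d i a =>
        if d = d0 then
          (if (e i).1 = t0 then ((2 * h : ℕ) : ℝ)⁻¹ else (if a = tops (e i).1 then 1 else 0))
        else ((if a = y d then 1 / 2 else 0) + (if a = x then 1 / 2 else 0)) with hvdef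
      have hvnonneg : ∀ d i a, 0 ≤ v d i a := by
        intro d i a
        simp only [hvdef]
        split
        · split
          · positivity
          · split <;> norm_num
        · have h1 : (0:ℝ) ≤ (if a = y d then 1 / 2 else 0) := by split <;> norm_num
          have h2 : (0:ℝ) ≤ (if a = x then 1 / 2 else 0) := by split <;> norm_num
          linarith
      have hvsum : ∀ d i, ∑ a, v d i a = 1 := by
        intro d i
        by_cases hd : d = d0
        · by_cases ht : (e i).1 = t0
          · simp only [hvdef, if_pos hd, if_pos ht, Finset.sum_const, Finset.card_univ,
              Fintype.card_fin, nsmul_eq_mul]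
            rw [mul_inv_cancel₀]
            exact Nat.cast_ne_zero.mpr (by omega)
          · simp [hvdef, if_pos hd, if_neg ht, Finset.sum_ite_eq']
        · have hyx : y d ≠ x := Ne.symm (hx d)
          simp only [hvdef, if_neg hd]
          rw [Finset.sum_add_distrib]
          simp only [Finset.sum_ite_eq', Finset.mem_univ, if_pos]
          norm_num
      have hvcons : ∀ d i a b, σ d i a < σ d i b → v d i b ≤ v d i a := by
        intro d i a b hab
        by_cases hd : d = d0
        · rw [hd, hσ0] at hab
          by_cases ht : (e i).1 = t0
          · simp [hvdef, if_pos hd, if_pos ht]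
          · simp only [hvdef, if_pos hd, if_neg ht]
            by_cases hb : b = tops (e i).1
            · exfalso
              by_cases ha : a = tops (e i).1
              · rw [ha, hb] at hab; exact lt_irrefl _ hab
              · exact absurd hab (not_lt.mpr (le_of_lt (by
                  rw [hb]; exact hdivided i a ha)))
            · rw [if_neg hb]
              split <;> norm_num
        · rw [hσd d hd] at hab
          simp only [hvdef, if_neg hd]
          by_cases hb1 : b = y d
          · exact absurd (hb1 ▸ hab) (hπlt d a)
          · by_cases hb2 : b = x
            · have ha : a = y d := hπltx d a (hb2 ▸ hab)
              rw [ha, hb2, if_pos rfl, if_neg (Ne.symm (hx d)),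
                if_neg (hx d), if_pos rfl]
              norm_num
            · rw [if_neg hb1, if_neg hb2]
              have h1 : (0:ℝ) ≤ (if a = y d then 1 / 2 else 0) := by split <;> norm_num
              have h2 : (0:ℝ) ≤ (if a = x then 1 / 2 else 0) := by split <;> norm_num
              linarith
      refine ⟨σ, v, hσ0, ?_, hvnonneg, hvsum, hvcons, ?_⟩
      · intro d hd i
        rw [hσd d hd]
        exact ⟨fun b hb => hπtop d b hb, fun b hb hbx => hπsecond d b hb hbx⟩
      · have hdenom : (∑ d, ∑ i, v d i (y d0)) = (s : ℝ) / (2 * h) := by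
          have hinner : ∀ d, (∑ i, v d i (y d0)) =
              if d = d0 then (s : ℝ) / (2 * h) else 0 := by
            intro d
            by_cases hd : d = d0
            · rw [if_pos hd]
              have hterm : ∀ i, v d i (y d0) =
                  if (e i).1 = t0 then ((2 * h : ℕ) : ℝ)⁻¹ else 0 := by
                intro i
                by_cases ht : (e i).1 = t0
                · simp [hvdef, if_pos hd, if_pos ht]
                · have hne : y d0 ≠ tops (e i).1 := by
                    intro hcon
                    exact ht (htops (by rw [← hcon, ht0]))
                  simp [hvdef, if_pos hd, if_neg ht, if_neg hne]
              rw [Finset.sum_congr rfl (fun i _ => hterm i)]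
              rw [Fintype.sum_equiv e
                (fun i => if (e i).1 = t0 then ((2 * h : ℕ) : ℝ)⁻¹ else 0)
                (fun p => if p.1 = t0 then ((2 * h : ℕ) : ℝ)⁻¹ else 0)
                (fun i => rfl)]
              rw [Fintype.sum_prod_type]
              have hrow : ∀ t : Fin h,
                  (∑ _j : Fin s, if t = t0 then ((2 * h : ℕ) : ℝ)⁻¹ else 0)
                    = if t = t0 then (s : ℝ) * ((2 * h : ℕ) : ℝ)⁻¹ else 0 := by
                intro t
                split <;> simp [Finset.sum_const, nsmul_eq_mul]
              rw [Finset.sum_congr rfl (fun t _ => hrow t)]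
              rw [Finset.sum_ite_eq' Finset.univ t0
                (fun _ => (s : ℝ) * ((2 * h : ℕ) : ℝ)⁻¹)]
              simp only [Finset.mem_univ, if_pos]
              push_cast
              ring
            · rw [if_neg hd]
              apply Finset.sum_eq_zero
              intro i _
              have h1 : y d0 ≠ y d := fun hcon => hd (hy hcon).symm
              simp [hvdef, if_neg hd, if_neg h1, if_neg (Ne.symm (hx d0))]
          rw [Finset.sum_congr rfl (fun d _ => hinner d)]
          rw [Finset.sum_ite_eq' Finset.univ d0 (fun _ => (s : ℝ) / (2 * h))]
          simp
        have hxlb : ((k : ℝ) - 1) * ((h : ℝ) * s) / 2 ≤ ∑ d, ∑ i, v d i x := by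
          have hinner : ∀ d, (if d = d0 then 0 else ((h : ℝ) * s) / 2) ≤ ∑ i, v d i x := by
            intro d
            by_cases hd : d = d0
            · rw [if_pos hd]
              exact Finset.sum_nonneg (fun i _ => hvnonneg d i x)
            · rw [if_neg hd]
              have hterm : ∀ i, v d i x = 1 / 2 := by
                intro i
                simp [hvdef, if_neg hd, if_neg (hx d)]
              rw [Finset.sum_congr rfl (fun i _ => hterm i)]
              simp only [Finset.sum_const, Finset.card_univ, Fintype.card_fin, nsmul_eq_mul]
              push_cast
              ring_nf
              exact le_refl _
          calc ((k : ℝ) - 1) * ((h : ℝ) * s) / 2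
              = ∑ d : Fin k, (if d = d0 then 0 else ((h : ℝ) * s) / 2) := by
                have hsplit : ∀ d : Fin k, (if d = d0 then (0:ℝ) else ((h : ℝ) * s) / 2)
                    = ((h : ℝ) * s) / 2 - (if d = d0 then ((h : ℝ) * s) / 2 else 0) := by
                  intro d; split <;> ring
                rw [Finset.sum_congr rfl (fun d _ => hsplit d), Finset.sum_sub_distrib,
                  Finset.sum_const, Finset.card_univ, Fintype.card_fin,
                  Finset.sum_ite_eq' Finset.univ d0 (fun _ => ((h : ℝ) * s) / 2)]
                simp only [Finset.mem_univ, if_pos, nsmul_eq_mul]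
                ring
            _ ≤ ∑ d, ∑ i, v d i x := Finset.sum_le_sum (fun d _ => hinner d)
        obtain ⟨a, -, hamax⟩ := Finset.exists_max_image Finset.univ
          (fun a => ∑ d, ∑ i, v d i a) ⟨x, Finset.mem_univ x⟩
        refine ⟨a, fun b => hamax b (Finset.mem_univ b), ?_⟩
        rw [hW, hdenom]
        have hh' : (1:ℝ) ≤ (h:ℝ) := by exact_mod_cast hh
        have hs' : (1:ℝ) ≤ (s:ℝ) := by exact_mod_cast hs
        have hD : (0:ℝ) < (s : ℝ) / (2 * h) := by positivity
        rw [le_div_iff₀ hD]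
        have hax : ((k : ℝ) - 1) * ((h : ℝ) * s) / 2 ≤ ∑ d, ∑ i, v d i a :=
          le_trans hxlb (hamax x (Finset.mem_univ x))
        have heq : ((k : ℝ) - 1) * (2 * (h : ℝ)) ^ 2 / 4 * ((s : ℝ) / (2 * h))
            = ((k : ℝ) - 1) * ((h : ℝ) * s) / 2 := by
          field_simp
          ring
        rw [heq]
        exact hax
    · left
      set v : Fin k → Fin (h * s) → Fin (2 * h) → ℝ := fun d i a =>
        if d = d0 then (if a = tops (e i).1 then 1 else 0)
        else (if a = y d then 1 else 0) with hvdef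
      have hvnonneg : ∀ d i a, 0 ≤ v d i a := by
        intro d i a
        simp only [hvdef]; split <;> split <;> norm_num
      refine ⟨σ, v, hvnonneg, ?_, ?_, ?_, ?_⟩
      · intro d i
        by_cases hd : d = d0 <;>
          simp [hvdef, hd, Finset.sum_ite_eq']
      · intro d i a b hab
        by_cases hd : d = d0
        · rw [hd, hσ0] at hab
          simp only [hvdef, if_pos hd]
          by_cases hb : b = tops (e i).1
          · exfalso
            by_cases ha : a = tops (e i).1
            · rw [ha, hb] at hab; exact lt_irrefl _ hab
            · exact absurd hab (not_lt.mpr (le_of_lt (by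
                rw [hb]; exact hdivided i a ha)))
          · rw [if_neg hb]; split <;> norm_num
        · rw [hσd d hd] at hab
          simp only [hvdef, if_neg hd]
          by_cases hb : b = y d
          · exact absurd (hb ▸ hab) (hπlt d a)
          · rw [if_neg hb]; split <;> norm_num
      · rw [hW]
        apply Finset.sum_eq_zero
        intro d _
        apply Finset.sum_eq_zero
        intro i _
        by_cases hd : d = d0
        · have hne : y d0 ≠ tops (e i).1 := fun hcon => hy0 ⟨(e i).1, hcon.symm⟩
          simp [hvdef, if_pos hd, if_neg hne]
        · have hne : y d0 ≠ y d := fun hcon => hd (hy hcon).symm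
          simp [hvdef, if_neg hd, if_neg hne]
      · have hd1 : (⟨1, by omega⟩ : Fin k) ≠ d0 := by
          intro hcon
          have := congrArg Fin.val hcon
          simp [hd0def] at this
        refine ⟨y ⟨1, by omega⟩, ?_⟩
        apply Finset.sum_pos'
        · intro d _
          exact Finset.sum_nonneg (fun i _ => hvnonneg d i _)
        · refine ⟨⟨1, by omega⟩, Finset.mem_univ _, ?_⟩
          have hterm : ∀ i : Fin (h * s), v ⟨1, by omega⟩ i (y ⟨1, by omega⟩) = 1 := by
            intro i
            simp [hvdef, if_neg hd1]
          rw [Finset.sum_congr rfl (fun i _ => hterm i)]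
          simp only [Finset.sum_const, Finset.card_univ, Fintype.card_fin, nsmul_eq_mul,
            mul_one]
          have hps : (0:ℕ) < h * s := by positivity
          exact_mod_cast hps
  · left
    push_neg at hA
    obtain ⟨d1, hd1, hz⟩ := hA
    refine ⟨fun _ _ => π d1, fun _ _ a => if a = y d1 then 1 else 0, ?_, ?_, ?_, ?_, ?_⟩
    · intro d i a; dsimp only; split <;> norm_num
    · intro d i; simp [Finset.sum_ite_eq']
    · intro d i a b hab
      dsimp only at hab ⊢
      by_cases hb : b = y d1
      · exact absurd (hb ▸ hab) (hπlt d1 a)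
      · rw [if_neg hb]; split <;> norm_num
    · have hfun : (fun d' : Fin k => fin (fun _ => π d1)) = fun _ : Fin k => fin (σ d1) := by
        funext d'
        rw [hσd d1 hd1]
      rw [hfun]
      obtain ⟨dw, hdw⟩ := hfover_rep (fun _ => fin (σ d1))
      rw [hdw]
      apply Finset.sum_eq_zero
      intro d _
      apply Finset.sum_eq_zero
      intro i _
      simp [if_neg hz]
    · refine ⟨y d1, ?_⟩
      have hterm : ∀ (d : Fin k) (i : Fin (h * s)),
          (if y d1 = y d1 then (1:ℝ) else 0) = 1 := fun _ _ => if_pos rfl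
      rw [Finset.sum_congr rfl (fun d _ => Finset.sum_congr rfl
        (fun i (_ : i ∈ Finset.univ) => hterm d i))]
      simp only [Finset.sum_const, Finset.card_univ, Fintype.card_fin, nsmul_eq_mul,
        mul_one]
      have hpos : (0:ℕ) < k * (h * s) := by positivity
      exact_mod_cast hpos
end

section
/- There is a universal constant c > 0 such that for every integer k ≥ 2, every sufficiently large even m with m/2 ≥ k, and every λ that is a multiple of m/2, every deterministic ordinal distributed mechanism on instances with k symmetric districts of λ agents and m alternatives has distortion at least c·k·m²; that is, the distortion of every deterministic ordinal distributed mechanism is Ω(km²). -/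
private lemma corelem {α : Type*} [DecidableEq α] (U : Finset α) (q ρ k : ℕ) (φ : Finset α → α)
    (hφ : ∀ S, S ⊆ U → q ≤ S.card → φ S ∈ S)
    (hq1 : 1 ≤ q) (hqρ : q ≤ ρ + 1) (hρU : ρ + 1 ≤ U.card)
    (har : (k - 1) * (ρ + 1) < (U.card - ρ) * (ρ + 2 - q)) :
    ∃ y : Fin k → α, Function.Injective y ∧ ∀ d, y d ∈ U ∧
      ∃ S, S ⊆ U ∧ q ≤ S.card ∧ φ S = y d ∧ ∀ d', d' ≠ d → y d' ∉ S := by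
  classical
  set vis : Finset α → Finset α :=
    fun V => (V.powerset.filter fun S => q ≤ S.card).image φ with hvisdef
  have hvis_key : ∀ n (V : Finset α), V.card ≤ n → V ⊆ U → q ≤ V.card →
      V.card + 1 ≤ (vis V).card + q := by
    intro n
    induction n with
    | zero => intro V h0 _ hqV; omega
    | succ n ih =>
      intro V hVn hVU hqV
      have hφV : φ V ∈ V := hφ V hVU hqV
      have hφvis : φ V ∈ vis V := by
        refine Finset.mem_image.mpr ⟨V, ?_, rfl⟩
        exact Finset.mem_filter.mpr ⟨Finset.mem_powerset.mpr (Finset.Subset.refl V), hqV⟩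
      have hvc : 1 ≤ (vis V).card := Finset.card_pos.mpr ⟨φ V, hφvis⟩
      by_cases hEq : V.card = q
      · omega
      · have hq1V : q + 1 ≤ V.card := by omega
        have hV'card : (V.erase (φ V)).card = V.card - 1 := Finset.card_erase_of_mem hφV
        have hsub : vis (V.erase (φ V)) ⊆ (vis V).erase (φ V) := by
          intro x hx
          obtain ⟨S, hS, hxS⟩ := Finset.mem_image.mp hx
          obtain ⟨hSsub, hSq⟩ := Finset.mem_filter.mp hS
          have hSV' : S ⊆ V.erase (φ V) := Finset.mem_powerset.mp hSsub
          have hSU : S ⊆ U := hSV'.trans ((Finset.erase_subset _ _).trans hVU)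
          have hxS' : x ∈ S := hxS ▸ hφ S hSU hSq
          refine Finset.mem_erase.mpr ⟨(Finset.mem_erase.mp (hSV' hxS')).1, ?_⟩
          exact Finset.mem_image.mpr ⟨S, Finset.mem_filter.mpr
            ⟨Finset.mem_powerset.mpr (hSV'.trans (Finset.erase_subset _ _)), hSq⟩, hxS⟩
        have ihV' := ih (V.erase (φ V)) (by omega)
          ((Finset.erase_subset _ _).trans hVU) (by omega)
        have hce : ((vis V).erase (φ V)).card = (vis V).card - 1 :=
          Finset.card_erase_of_mem hφvis
        have hcc := Finset.card_le_card hsub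
        omega
  set EV : Finset α → Finset α := fun R =>
    (U \ R).filter fun a => ∃ S, S ⊆ insert a R ∧ q ≤ S.card ∧ φ S = a with hEVdef
  have hEV : ∃ R, R ⊆ U ∧ R.card = ρ ∧ k ≤ (EV R).card := by
    by_contra hcon
    push_neg at hcon
    rcases Nat.eq_zero_or_pos k with hk0 | hk1
    · obtain ⟨R, hRU, hRc⟩ := Finset.exists_subset_card_eq (s := U) (n := ρ) (by omega)
      have := hcon R hRU hRc
      omega
    -- counting
    have hsum1 : (U.card.choose (ρ+1)) * (ρ + 2 - q) ≤
        ∑ V ∈ U.powersetCard (ρ+1), (vis V).card := by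
      have hb : ∀ V ∈ U.powersetCard (ρ+1), ρ + 2 - q ≤ (vis V).card := by
        intro V hV
        obtain ⟨hVU, hVc⟩ := Finset.mem_powersetCard.mp hV
        have := hvis_key V.card V le_rfl hVU (by omega)
        omega
      calc (U.card.choose (ρ+1)) * (ρ + 2 - q)
          = (U.powersetCard (ρ+1)).card • (ρ + 2 - q) := by
            rw [Finset.card_powersetCard, smul_eq_mul]
        _ ≤ ∑ V ∈ U.powersetCard (ρ+1), (vis V).card :=
            Finset.card_nsmul_le_sum _ _ _ hb
    have hsum2 : ∑ R ∈ U.powersetCard ρ, (EV R).card ≤ (U.card.choose ρ) * (k-1) := by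
      have hb : ∀ R ∈ U.powersetCard ρ, (EV R).card ≤ k - 1 := by
        intro R hR
        obtain ⟨hRU, hRc⟩ := Finset.mem_powersetCard.mp hR
        have := hcon R hRU hRc
        omega
      calc ∑ R ∈ U.powersetCard ρ, (EV R).card
          ≤ (U.powersetCard ρ).card • (k-1) := Finset.sum_le_card_nsmul _ _ _ hb
        _ = (U.card.choose ρ) * (k-1) := by rw [Finset.card_powersetCard, smul_eq_mul]
    -- injection between sigma sets
    have hinj : ((U.powersetCard (ρ+1)).sigma fun V => vis V).card ≤
        ((U.powersetCard ρ).sigma fun R => EV R).card := by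
      apply Finset.card_le_card_of_injOn
        (fun p => (⟨p.1.erase p.2, p.2⟩ : (_ : Finset α) × α))
      · intro p hp
        obtain ⟨hV, hx⟩ := Finset.mem_sigma.mp hp
        obtain ⟨hVU, hVc⟩ := Finset.mem_powersetCard.mp hV
        obtain ⟨S, hS, hxS⟩ := Finset.mem_image.mp hx
        obtain ⟨hSsub, hSq⟩ := Finset.mem_filter.mp hS
        have hSV : S ⊆ p.1 := Finset.mem_powerset.mp hSsub
        have hxp : p.2 ∈ p.1 := hSV (hxS ▸ hφ S (hSV.trans hVU) hSq)
        refine Finset.mem_sigma.mpr ⟨?_, ?_⟩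
        · refine Finset.mem_powersetCard.mpr ⟨(Finset.erase_subset _ _).trans hVU, ?_⟩
          rw [Finset.card_erase_of_mem hxp, hVc]
          omega
        · refine Finset.mem_filter.mpr ⟨?_, ?_⟩
          · exact Finset.mem_sdiff.mpr ⟨hVU hxp, Finset.notMem_erase _ _⟩
          · exact ⟨S, by rw [Finset.insert_erase hxp]; exact hSV, hSq, hxS⟩
      · intro p hp p' hp' heq
        obtain ⟨hV, hx⟩ := Finset.mem_sigma.mp hp
        obtain ⟨hV', hx'⟩ := Finset.mem_sigma.mp hp'
        have hxp : p.2 ∈ p.1 := by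
          obtain ⟨S, hS, hxS⟩ := Finset.mem_image.mp hx
          obtain ⟨hSsub, hSq⟩ := Finset.mem_filter.mp hS
          have hSV : S ⊆ p.1 := Finset.mem_powerset.mp hSsub
          exact hSV (hxS ▸ hφ S (hSV.trans (Finset.mem_powersetCard.mp hV).1) hSq)
        have hxp' : p'.2 ∈ p'.1 := by
          obtain ⟨S, hS, hxS⟩ := Finset.mem_image.mp hx'
          obtain ⟨hSsub, hSq⟩ := Finset.mem_filter.mp hS
          have hSV : S ⊆ p'.1 := Finset.mem_powerset.mp hSsub
          exact hSV (hxS ▸ hφ S (hSV.trans (Finset.mem_powersetCard.mp hV').1) hSq)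
        have h2 : p.2 = p'.2 := congrArg Sigma.snd heq
        have h1 : p.1.erase p.2 = p'.1.erase p'.2 := by
          have := congrArg Sigma.fst heq
          simpa using this
        have : p.1 = p'.1 := by
          rw [← Finset.insert_erase hxp, ← Finset.insert_erase hxp', h1, h2]
        exact Sigma.ext this (by rw [h2])
    rw [Finset.card_sigma, Finset.card_sigma] at hinj
    have hfinal : (U.card.choose (ρ+1)) * (ρ + 2 - q) ≤ (U.card.choose ρ) * (k-1) :=
      le_trans hsum1 (le_trans hinj hsum2)
    have hch : U.card.choose (ρ+1) * (ρ+1) = U.card.choose ρ * (U.card - ρ) :=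
      Nat.choose_succ_right_eq _ _
    have hpos : 0 < U.card.choose ρ := Nat.choose_pos (by omega)
    have hmul := Nat.mul_le_mul_right (ρ+1) hfinal
    have hkey : U.card.choose ρ * ((U.card - ρ) * (ρ + 2 - q)) ≤
        U.card.choose ρ * ((k-1) * (ρ+1)) := by
      calc U.card.choose ρ * ((U.card - ρ) * (ρ + 2 - q))
          = (U.card.choose (ρ+1) * (ρ+1)) * (ρ + 2 - q) := by rw [hch]; ring
        _ = U.card.choose (ρ+1) * (ρ + 2 - q) * (ρ+1) := by ring
        _ ≤ U.card.choose ρ * (k-1) * (ρ+1) := hmul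
        _ = U.card.choose ρ * ((k-1) * (ρ+1)) := by ring
    have := Nat.le_of_mul_le_mul_left hkey hpos
    omega
  obtain ⟨R, hRU, hRc, hRk⟩ := hEV
  obtain ⟨Y, hYsub, hYc⟩ := Finset.exists_subset_card_eq (s := EV R) (n := k) hRk
  have hYEV : ∀ z : Y, (z : α) ∈ EV R := fun z => hYsub z.2
  let e : Fin k ≃ {x // x ∈ Y} := (finCongr hYc.symm).trans Y.equivFin.symm
  refine ⟨fun d => (e d : α), ?_, ?_⟩
  · intro d d' hdd'
    exact e.injective (Subtype.coe_injective hdd')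
  · intro d
    have hmem : (e d : α) ∈ EV R := hYsub (e d).2
    obtain ⟨hUR, hex⟩ := Finset.mem_filter.mp hmem
    obtain ⟨hU, hnR⟩ := Finset.mem_sdiff.mp hUR
    obtain ⟨S, hSsub, hSq, hSφ⟩ := hex
    refine ⟨hU, S, hSsub.trans (Finset.insert_subset hU hRU), hSq, hSφ, ?_⟩
    intro d' hdd' hmem'
    rcases Finset.mem_insert.mp (hSsub hmem') with h1 | h2
    · exact hdd' (e.injective (Subtype.coe_injective h1))
    · have hmem2 : (e d' : α) ∈ EV R := hYsub (e d').2
      exact (Finset.mem_sdiff.mp (Finset.mem_filter.mp hmem2).1).2 h2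

private def topsF {n m : ℕ} [NeZero m] (S : Finset (Fin m)) (i : Fin n) : Fin m :=
  (S.sort (· ≤ ·)).getD ((i : ℕ) % S.card) ⟨0, Nat.pos_of_ne_zero (NeZero.ne m)⟩

private lemma topsF_mem {n m : ℕ} [NeZero m] (S : Finset (Fin m)) (h : 0 < S.card)
    (i : Fin n) : topsF S i ∈ S := by
  have hlen : ((i : ℕ) % S.card) < (S.sort (· ≤ ·)).length := by
    rw [Finset.length_sort]; exact Nat.mod_lt _ h
  rw [topsF, List.getD_eq_getElem _ _ hlen]
  exact (Finset.mem_sort _).mp (List.getElem_mem hlen)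

private lemma topsF_count {n m : ℕ} [NeZero m] (S : Finset (Fin m)) (h0 : 0 < S.card)
    (x : Fin m) :
    ((Finset.univ : Finset (Fin n)).filter fun i => topsF S i = x).card ≤ n / S.card + 1 := by
  classical
  have hlen : (S.sort (· ≤ ·)).length = S.card := Finset.length_sort _
  refine le_trans (Finset.card_le_card_of_injOn (t := Finset.range (n / S.card + 1)) (fun i => (i : ℕ) / S.card) ?_ ?_) ?_
  · intro i _
    exact Finset.mem_range.mpr (Nat.lt_succ_of_le (Nat.div_le_div_right (le_of_lt i.isLt)))
  · intro i hi j hj hij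
    simp only [Finset.coe_filter, Set.mem_setOf_eq, Finset.mem_univ, true_and] at hi hj
    have hi' : (i : ℕ) % S.card < (S.sort (· ≤ ·)).length := by
      rw [hlen]; exact Nat.mod_lt _ h0
    have hj' : (j : ℕ) % S.card < (S.sort (· ≤ ·)).length := by
      rw [hlen]; exact Nat.mod_lt _ h0
    have heq : (S.sort (· ≤ ·)).get ⟨(i : ℕ) % S.card, hi'⟩
        = (S.sort (· ≤ ·)).get ⟨(j : ℕ) % S.card, hj'⟩ := by
      have e1 : topsF S i = (S.sort (· ≤ ·)).get ⟨(i : ℕ) % S.card, hi'⟩ :=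
        List.getD_eq_get _ _ ⟨_, hi'⟩
      have e2 : topsF S j = (S.sort (· ≤ ·)).get ⟨(j : ℕ) % S.card, hj'⟩ :=
        List.getD_eq_get _ _ ⟨_, hj'⟩
      rw [← e1, ← e2, hi, hj]
    have hmodf := (List.Nodup.get_inj_iff (Finset.sort_nodup _ _)).mp heq
    have hmod : (i : ℕ) % S.card = (j : ℕ) % S.card := congrArg Fin.val hmodf
    have hij' : (i : ℕ) / S.card = (j : ℕ) / S.card := hij
    have hval : (i : ℕ) = (j : ℕ) := by
      conv_lhs => rw [← Nat.div_add_mod (i : ℕ) S.card]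
      conv_rhs => rw [← Nat.div_add_mod (j : ℕ) S.card]
      rw [hmod, hij']
    exact Fin.ext hval
  · rw [Finset.card_range]


set_option maxHeartbeats 1000000 in
theorem stmt3 :
    ∃ c : ℝ, 0 < c ∧ ∃ m0 : ℕ, ∀ k h s : ℕ,
      2 ≤ k → k ≤ h → 1 ≤ s → m0 ≤ 2 * h →
      ∀ (fin : (Fin (h * s) → (Fin (2 * h) ≃ Fin (2 * h))) → Fin (2 * h))
        (fover : (Fin k → Fin (2 * h)) → Fin (2 * h)),
        (∀ reps, ∃ d, fover reps = reps d) →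
        ∃ (σ : Fin k → Fin (h * s) → (Fin (2 * h) ≃ Fin (2 * h)))
          (v : Fin k → Fin (h * s) → Fin (2 * h) → ℝ),
          (∀ d i a, 0 ≤ v d i a) ∧ (∀ d i, ∑ a, v d i a = 1) ∧
          (∀ d i a b, σ d i a < σ d i b → v d i b ≤ v d i a) ∧
          ∃ a, (∀ b, (∑ d, ∑ i, v d i b) ≤ (∑ d, ∑ i, v d i a)) ∧
            c * k * (2 * (h : ℝ)) ^ 2 *
                (∑ d, ∑ i, v d i (fover fun d' => fin (σ d'))) ≤
              (∑ d, ∑ i, v d i a) := by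
  classical
  refine ⟨1/100, by norm_num, 1000, ?_⟩
  intro k h s hk2 hkh hs1 hm0 fin fover hfover
  have hh : 500 ≤ h := by omega
  haveI : NeZero (2*h) := ⟨by omega⟩
  have hhR : (500:ℝ) ≤ (h:ℝ) := by exact_mod_cast hh
  have hkR : (2:ℝ) ≤ (k:ℝ) := by exact_mod_cast hk2
  have hsR : (1:ℝ) ≤ (s:ℝ) := by exact_mod_cast hs1
  have hhne : ((h:ℝ)) ≠ 0 := Nat.cast_ne_zero.mpr (by omega)
  -- special alternatives
  let z0 : Fin (2*h) := ⟨0, by omega⟩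
  let z1 : Fin (2*h) := ⟨1, by omega⟩
  let z2 : Fin (2*h) := ⟨2, by omega⟩
  let A1 : Fin (2*h) := ⟨2*h-2, by omega⟩
  let A2 : Fin (2*h) := ⟨2*h-1, by omega⟩
  have hz0v : (z0 : ℕ) = 0 := rfl
  have hz1v : (z1 : ℕ) = 1 := rfl
  have hz2v : (z2 : ℕ) = 2 := rfl
  have hA1v : (A1 : ℕ) = 2*h-2 := rfl
  have hA2v : (A2 : ℕ) = 2*h-1 := rfl
  -- the ranking permutation
  let rnk : Fin (2*h) → (Fin (2*h) ≃ Fin (2*h)) :=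
    fun t => ((Equiv.swap t z0).trans (Equiv.swap A1 z1)).trans (Equiv.swap A2 z2)
  have hrnk_app : ∀ t x, rnk t x
      = (Equiv.swap A2 z2) ((Equiv.swap A1 z1) ((Equiv.swap t z0) x)) := fun t x => rfl
  have hr_t : ∀ t : Fin (2*h), rnk t t = z0 := by
    intro t
    have e1 : Equiv.swap t z0 t = z0 := Equiv.swap_apply_left _ _
    have e2 : Equiv.swap A1 z1 z0 = z0 := Equiv.swap_apply_of_ne_of_ne
      (Fin.ne_of_val_ne (show (z0:ℕ) ≠ (A1:ℕ) by omega))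
      (Fin.ne_of_val_ne (show (z0:ℕ) ≠ (z1:ℕ) by omega))
    have e3 : Equiv.swap A2 z2 z0 = z0 := Equiv.swap_apply_of_ne_of_ne
      (Fin.ne_of_val_ne (show (z0:ℕ) ≠ (A2:ℕ) by omega))
      (Fin.ne_of_val_ne (show (z0:ℕ) ≠ (z2:ℕ) by omega))
    rw [hrnk_app, e1, e2, e3]
  have hr_A1 : ∀ t : Fin (2*h), (t : ℕ) < 2*h-2 → rnk t A1 = z1 := by
    intro t ht
    have e1 : Equiv.swap t z0 A1 = A1 := Equiv.swap_apply_of_ne_of_ne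
      (Fin.ne_of_val_ne (show (A1:ℕ) ≠ (t:ℕ) by omega))
      (Fin.ne_of_val_ne (show (A1:ℕ) ≠ (z0:ℕ) by omega))
    have e2 : Equiv.swap A1 z1 A1 = z1 := Equiv.swap_apply_left _ _
    have e3 : Equiv.swap A2 z2 z1 = z1 := Equiv.swap_apply_of_ne_of_ne
      (Fin.ne_of_val_ne (show (z1:ℕ) ≠ (A2:ℕ) by omega))
      (Fin.ne_of_val_ne (show (z1:ℕ) ≠ (z2:ℕ) by omega))
    rw [hrnk_app, e1, e2, e3]
  have hr_A2 : ∀ t : Fin (2*h), (t : ℕ) < 2*h-2 → rnk t A2 = z2 := by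
    intro t ht
    have e1 : Equiv.swap t z0 A2 = A2 := Equiv.swap_apply_of_ne_of_ne
      (Fin.ne_of_val_ne (show (A2:ℕ) ≠ (t:ℕ) by omega))
      (Fin.ne_of_val_ne (show (A2:ℕ) ≠ (z0:ℕ) by omega))
    have e2 : Equiv.swap A1 z1 A2 = A2 := Equiv.swap_apply_of_ne_of_ne
      (Fin.ne_of_val_ne (show (A2:ℕ) ≠ (A1:ℕ) by omega))
      (Fin.ne_of_val_ne (show (A2:ℕ) ≠ (z1:ℕ) by omega))
    have e3 : Equiv.swap A2 z2 A2 = z2 := Equiv.swap_apply_left _ _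
    rw [hrnk_app, e1, e2, e3]
  have hr3 : ∀ t : Fin (2*h), (t : ℕ) < 2*h-2 → ∀ x : Fin (2*h),
      ((rnk t x : Fin (2*h)) : ℕ) < 3 → x = t ∨ x = A1 ∨ x = A2 := by
    intro t ht x hx
    have hval : ((rnk t x : Fin (2*h)) : ℕ) = 0 ∨ ((rnk t x : Fin (2*h)) : ℕ) = 1
        ∨ ((rnk t x : Fin (2*h)) : ℕ) = 2 := by omega
    rcases hval with hv | hv | hv
    · exact Or.inl ((rnk t).injective ((Fin.ext (hv.trans hz0v.symm)).trans (hr_t t).symm))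
    · exact Or.inr (Or.inl ((rnk t).injective
        ((Fin.ext (hv.trans hz1v.symm)).trans (hr_A1 t ht).symm)))
    · exact Or.inr (Or.inr ((rnk t).injective
        ((Fin.ext (hv.trans hz2v.symm)).trans (hr_A2 t ht).symm)))
  -- the universe of non-star alternatives
  let U : Finset (Fin (2*h)) := Finset.univ.filter (fun a => (a : ℕ) < 2*h-2)
  have hUmem : ∀ a : Fin (2*h), a ∈ U ↔ (a : ℕ) < 2*h-2 := by
    intro a; simp [U]
  have hUcard : U.card = 2*h-2 := by
    rw [show 2*h-2 = (Finset.range (2*h-2)).card from (Finset.card_range _).symm]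
    apply Finset.card_bij (fun (a : Fin (2*h)) _ => (a : ℕ))
    · intro a ha; exact Finset.mem_range.mpr ((hUmem a).mp ha)
    · intro a _ b _ hab; exact Fin.ext hab
    · intro b hb
      refine ⟨⟨b, by have := Finset.mem_range.mp hb; omega⟩, ?_, rfl⟩
      exact (hUmem _).mpr (by simpa using Finset.mem_range.mp hb)
  let q : ℕ := h/8 + 1
  let ρ : ℕ := (2*h-2)/3
  have hq1 : 1 ≤ q := by omega
  -- counting supporters
  have hcnt : ∀ S : Finset (Fin (2*h)), q ≤ S.card → ∀ x : Fin (2*h),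
      ((Finset.univ : Finset (Fin (h*s))).filter fun i => topsF S i = x).card ≤ 8*s := by
    intro S hSq x
    have h0 : 0 < S.card := by omega
    refine le_trans (topsF_count S h0 x) ?_
    have h1 : h*s / S.card ≤ h*s/q := Nat.div_le_div_left hSq (by omega)
    have h2 : h*s/q < 8*s := by
      rw [Nat.div_lt_iff_lt_mul (show 0 < q by omega)]
      have h3 : h ≤ 8*(h/8)+7 := by omega
      calc h*s ≤ (8*(h/8)+7)*s := Nat.mul_le_mul_right _ h3
        _ < 8*s*(h/8+1) := by nlinarith
    omega
  -- the in-district map on profiles determined by a pool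
  let φF : Finset (Fin (2*h)) → Fin (2*h) :=
    fun S => fin (fun i : Fin (h*s) => rnk (topsF S i))
  by_cases hA : ∃ S, S ⊆ U ∧ q ≤ S.card ∧ φF S ∉ S
  · -- CASE A : some pool whose representative is topped by nobody
    obtain ⟨S₀, hS₀U, hS₀q, hS₀φ⟩ := hA
    have hS₀pos : 0 < S₀.card := by omega
    refine ⟨fun _ i => rnk (topsF S₀ i),
      fun _ i a => if a = topsF S₀ i then (1:ℝ) else 0, ?_, ?_, ?_, ?_⟩
    · intro d i a; dsimp only; split_ifs <;> norm_num
    · intro d i; dsimp only; simp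
    · intro d i a b hab
      dsimp only at hab ⊢
      by_cases hb : b = topsF S₀ i
      · exfalso
        rw [hb, hr_t] at hab
        have := Fin.lt_def.mp hab
        omega
      · rw [if_neg hb]; split_ifs <;> norm_num
    · obtain ⟨a, _, ha⟩ := Finset.exists_max_image Finset.univ
        (fun x => ∑ d : Fin k, ∑ i : Fin (h*s),
          (if x = topsF S₀ i then (1:ℝ) else 0)) ⟨z0, Finset.mem_univ _⟩
      refine ⟨a, fun b => ha b (Finset.mem_univ _), ?_⟩
      obtain ⟨d₀, hd₀⟩ := hfover (fun d' => fin ((fun _ i => rnk (topsF S₀ i)) d'))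
      have hwA : (fover fun d' => fin ((fun _ i => rnk (topsF S₀ i)) d')) = φF S₀ := hd₀
      rw [hwA]
      have hzero : (∑ d : Fin k, ∑ i : Fin (h*s),
          (if φF S₀ = topsF S₀ i then (1:ℝ) else 0)) = 0 := by
        apply Finset.sum_eq_zero; intro d _
        apply Finset.sum_eq_zero; intro i _
        rw [if_neg]
        intro hEq
        exact hS₀φ (hEq ▸ topsF_mem S₀ hS₀pos i)
      rw [hzero, mul_zero]
      apply Finset.sum_nonneg; intro d _
      apply Finset.sum_nonneg; intro i _
      dsimp only
      split_ifs <;> norm_num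
  · -- CASE B : the representative map is a choice function on pools
    push_neg at hA
    have har : (k - 1) * (ρ + 1) < (U.card - ρ) * (ρ + 2 - q) := by
      rw [hUcard]
      have hρq : q ≤ ρ := by omega
      have hN : 2*ρ ≤ 2*h-2 - ρ := by omega
      have hk1 : k - 1 ≤ h - 1 := by omega
      obtain ⟨h', hh'⟩ : ∃ h', h = h'+1 := ⟨h-1, by omega⟩
      have key : h' * (ρ+1) < 2*ρ * (ρ + 2 - q) := by
        have b1 : 8*ρ + 8 ≤ (h'+1) + 8*(ρ + 2 - q) := by omega
        have b2 : 2*(h'+1) ≤ 3*ρ + 4 := by omega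
        have b3 : 332 ≤ ρ := by omega
        nlinarith [Nat.mul_le_mul_left ρ b1, Nat.mul_le_mul_left ρ b2,
          Nat.mul_le_mul_right ρ b3]
      have key2 : (h-1) * (ρ+1) < 2*ρ * (ρ + 2 - q) := by
        refine lt_of_le_of_lt (Nat.mul_le_mul_right _ (by omega : h-1 ≤ h')) key
      calc (k-1)*(ρ+1) ≤ (h-1)*(ρ+1) := Nat.mul_le_mul_right _ hk1
        _ < 2*ρ*(ρ+2-q) := key2
        _ ≤ (2*h-2-ρ)*(ρ+2-q) := Nat.mul_le_mul_right _ hN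
    obtain ⟨y, hyInj, hy⟩ := corelem U q ρ k φF hA hq1
      (by omega) (by rw [hUcard]; omega) har
    choose hyU Sd hSU hSq hSφ hSpriv using hy
    have hyval : ∀ d, ((y d : Fin (2*h)) : ℕ) < 2*h-2 := fun d => (hUmem _).mp (hyU d)
    -- the district profiles
    obtain ⟨ds, hds⟩ := hfover (fun d' => fin ((fun d (i : Fin (h*s)) =>
      rnk (topsF (Sd d) i)) d'))
    have hw : (fover fun d' => fin ((fun d (i : Fin (h*s)) => rnk (topsF (Sd d) i)) d'))
        = y ds := by rw [hds]; exact hSφ ds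
    -- valuations
    refine ⟨fun d (i : Fin (h*s)) => rnk (topsF (Sd d) i),
      fun d i a => if topsF (Sd d) i = y ds then (1:ℝ)/(2*(h:ℝ))
        else if a ∈ ({topsF (Sd d) i, A1, A2} : Finset (Fin (2*h))) then 1/3 else 0,
      ?_, ?_, ?_, ?_⟩
    · intro d i a; dsimp only; split_ifs <;> positivity
    · intro d i; dsimp only
      by_cases hsup : topsF (Sd d) i = y ds
      · rw [Finset.sum_congr rfl (fun a _ => if_pos hsup), Finset.sum_const,
          Finset.card_univ, Fintype.card_fin, nsmul_eq_mul]
        push_cast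
        field_simp
      · rw [Finset.sum_congr rfl (fun a _ => if_neg hsup)]
        have htop : topsF (Sd d) i ∈ U := (hSU d) (topsF_mem _ (by have := hSq d; omega) i)
        have ht : ((topsF (Sd d) i : Fin (2*h)) : ℕ) < 2*h-2 := (hUmem _).mp htop
        rw [Finset.sum_ite_mem, Finset.univ_inter, Finset.sum_const]
        have hc3 : ({topsF (Sd d) i, A1, A2} : Finset (Fin (2*h))).card = 3 := by
          rw [Finset.card_insert_of_notMem, Finset.card_insert_of_notMem,
            Finset.card_singleton]
          · exact fun hc => absurd (Finset.mem_singleton.mp hc)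
              (Fin.ne_of_val_ne (by omega))
          · intro hc
            rcases Finset.mem_insert.mp hc with hc | hc
            · exact absurd hc (Fin.ne_of_val_ne (by omega))
            · exact absurd (Finset.mem_singleton.mp hc) (Fin.ne_of_val_ne (by omega))
        rw [hc3]; norm_num
    · intro d i a b hab
      dsimp only at hab ⊢
      by_cases hsup : topsF (Sd d) i = y ds
      · rw [if_pos hsup, if_pos hsup]
      · rw [if_neg hsup, if_neg hsup]
        have htop : topsF (Sd d) i ∈ U := (hSU d) (topsF_mem _ (by have := hSq d; omega) i)
        have ht : ((topsF (Sd d) i : Fin (2*h)) : ℕ) < 2*h-2 := (hUmem _).mp htop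
        by_cases hbT : b ∈ ({topsF (Sd d) i, A1, A2} : Finset (Fin (2*h)))
        · have hbv : ((rnk (topsF (Sd d) i) b : Fin (2*h)) : ℕ) < 3 := by
            rcases Finset.mem_insert.mp hbT with hb | hb
            · rw [hb, hr_t]; omega
            · rcases Finset.mem_insert.mp hb with hb | hb
              · rw [hb, hr_A1 _ ht]; omega
              · rw [Finset.mem_singleton.mp hb, hr_A2 _ ht]; omega
          have hav : ((rnk (topsF (Sd d) i) a : Fin (2*h)) : ℕ) < 3 := by
            have := Fin.lt_def.mp hab
            omega
          have haT : a ∈ ({topsF (Sd d) i, A1, A2} : Finset (Fin (2*h))) := by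
            rcases hr3 _ ht a hav with hc | hc | hc
            · exact Finset.mem_insert.mpr (Or.inl hc)
            · exact Finset.mem_insert.mpr (Or.inr (Finset.mem_insert.mpr (Or.inl hc)))
            · exact Finset.mem_insert.mpr (Or.inr (Finset.mem_insert.mpr
                (Or.inr (Finset.mem_singleton.mpr hc))))
          rw [if_pos hbT, if_pos haT]
        · rw [if_neg hbT]
          split_ifs <;> norm_num
    · -- the social-welfare comparison
      set v : Fin k → Fin (h*s) → Fin (2*h) → ℝ := fun d i a =>
        if topsF (Sd d) i = y ds then (1:ℝ)/(2*(h:ℝ))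
        else if a ∈ ({topsF (Sd d) i, A1, A2} : Finset (Fin (2*h))) then 1/3 else 0
        with hvdef
      obtain ⟨a, _, ha⟩ := Finset.exists_max_image Finset.univ
        (fun x => ∑ d : Fin k, ∑ i : Fin (h*s), v d i x) ⟨z0, Finset.mem_univ _⟩
      refine ⟨a, fun b => ha b (Finset.mem_univ _), ?_⟩
      rw [hw]
      -- counts of supporters of the winner
      have hX0 : (0:ℝ) ≤ (((Finset.univ : Finset (Fin (h*s))).filter
          (fun i => topsF (Sd ds) i = y ds)).card : ℝ) := Nat.cast_nonneg _
      have hX8 : (((Finset.univ : Finset (Fin (h*s))).filter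
          (fun i => topsF (Sd ds) i = y ds)).card : ℝ) ≤ 8*(s:ℝ) := by
        exact_mod_cast hcnt (Sd ds) (hSq ds) (y ds)
      have hite : ∀ r : ℝ, (∑ d : Fin k, ∑ i : Fin (h*s),
          (if topsF (Sd d) i = y ds then r else 0))
          = (((Finset.univ : Finset (Fin (h*s))).filter
              (fun i => topsF (Sd ds) i = y ds)).card : ℝ) * r := by
        intro r
        have hinner : ∀ d, (∑ i : Fin (h*s), (if topsF (Sd d) i = y ds then r else 0))
            = (((Finset.univ : Finset (Fin (h*s))).filter
                fun i => topsF (Sd d) i = y ds).card : ℝ) * r := by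
          intro d
          rw [← Finset.sum_filter, Finset.sum_const, nsmul_eq_mul]
        rw [Finset.sum_congr rfl (fun d _ => hinner d)]
        refine Finset.sum_eq_single ds ?_ ?_
        · intro d _ hd
          have hzero : ((Finset.univ : Finset (Fin (h*s))).filter
              (fun i => topsF (Sd d) i = y ds)) = ∅ := by
            rw [Finset.filter_eq_empty_iff]
            intro i _
            intro hEq
            exact hSpriv d ds (Ne.symm hd) (hEq ▸ topsF_mem _ (by have := hSq d; omega) i)
          rw [hzero]; simp
        · intro hc; exact absurd (Finset.mem_univ ds) hc
      have hSWw : (∑ d : Fin k, ∑ i : Fin (h*s), v d i (y ds))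
          = (((Finset.univ : Finset (Fin (h*s))).filter
              (fun i => topsF (Sd ds) i = y ds)).card : ℝ) * ((1:ℝ)/(2*(h:ℝ))) := by
        rw [← hite ((1:ℝ)/(2*(h:ℝ)))]
        apply Finset.sum_congr rfl; intro d _
        apply Finset.sum_congr rfl; intro i _
        simp only [hvdef]
        by_cases hsup : topsF (Sd d) i = y ds
        · rw [if_pos hsup, if_pos hsup]
        · rw [if_neg hsup, if_neg hsup, if_neg]
          intro hc
          rcases Finset.mem_insert.mp hc with hc | hc
          · exact hsup hc.symm
          · rcases Finset.mem_insert.mp hc with hc | hc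
            · exact absurd hc (Fin.ne_of_val_ne (by have := hyval ds; omega))
            · exact absurd (Finset.mem_singleton.mp hc)
                (Fin.ne_of_val_ne (by have := hyval ds; omega))
      -- the star's social welfare
      have hstar : (k:ℝ) * ((h:ℝ)*(s:ℝ)) * (1/3)
            - (((Finset.univ : Finset (Fin (h*s))).filter
              (fun i => topsF (Sd ds) i = y ds)).card : ℝ) * (1/3)
          ≤ ∑ d : Fin k, ∑ i : Fin (h*s), v d i A1 := by
        have hub : ∀ (d : Fin k) (i : Fin (h*s)),
            (1:ℝ)/3 - (if topsF (Sd d) i = y ds then (1:ℝ)/3 else 0) ≤ v d i A1 := by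
          intro d i
          simp only [hvdef]
          by_cases hsup : topsF (Sd d) i = y ds
          · rw [if_pos hsup, if_pos hsup]
            have : (0:ℝ) ≤ (1:ℝ)/(2*(h:ℝ)) := by positivity
            linarith
          · rw [if_neg hsup, if_neg hsup, if_pos]
            · norm_num
            · exact Finset.mem_insert.mpr (Or.inr (Finset.mem_insert.mpr (Or.inl rfl)))
        calc (k:ℝ) * ((h:ℝ)*(s:ℝ)) * (1/3)
            - (((Finset.univ : Finset (Fin (h*s))).filter
              (fun i => topsF (Sd ds) i = y ds)).card : ℝ) * (1/3)
            = (∑ d : Fin k, ∑ i : Fin (h*s), (1:ℝ)/3)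
              - (∑ d : Fin k, ∑ i : Fin (h*s),
                  (if topsF (Sd d) i = y ds then (1:ℝ)/3 else 0)) := by
              rw [hite]
              rw [Finset.sum_congr rfl (fun d _ => Finset.sum_const ((1:ℝ)/3)),
                Finset.sum_const]
              simp only [Finset.card_univ, Fintype.card_fin, nsmul_eq_mul]
              push_cast
              ring
          _ = ∑ d : Fin k, ∑ i : Fin (h*s), ((1:ℝ)/3
              - (if topsF (Sd d) i = y ds then (1:ℝ)/3 else 0)) := by
              rw [← Finset.sum_sub_distrib]
              apply Finset.sum_congr rfl; intro d _
              rw [← Finset.sum_sub_distrib]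
          _ ≤ ∑ d : Fin k, ∑ i : Fin (h*s), v d i A1 := by
              apply Finset.sum_le_sum; intro d _
              apply Finset.sum_le_sum; intro i _
              exact hub d i
      have hSWa : (k:ℝ) * ((h:ℝ)*(s:ℝ)) * (1/3)
            - (((Finset.univ : Finset (Fin (h*s))).filter
              (fun i => topsF (Sd ds) i = y ds)).card : ℝ) * (1/3)
          ≤ ∑ d : Fin k, ∑ i : Fin (h*s), v d i a :=
        le_trans hstar (ha A1 (Finset.mem_univ _))
      obtain ⟨X, hX0', hX8', hSWw', hSWa'⟩ :
          ∃ X : ℝ, 0 ≤ X ∧ X ≤ 8*(s:ℝ) ∧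
            (∑ d : Fin k, ∑ i : Fin (h*s), v d i (y ds)) = X * ((1:ℝ)/(2*(h:ℝ))) ∧
            (k:ℝ) * ((h:ℝ)*(s:ℝ)) * (1/3) - X * (1/3)
              ≤ ∑ d : Fin k, ∑ i : Fin (h*s), v d i a :=
        ⟨_, hX0, hX8, hSWw, hSWa⟩
      rw [hSWw']
      have hkh : (1000:ℝ) ≤ (k:ℝ)*(h:ℝ) := by nlinarith
      have heq : (1:ℝ)/100 * (k:ℝ) * (2*(h:ℝ))^2 * (X * (1/(2*(h:ℝ))))
          = (1/50) * ((k:ℝ)*(h:ℝ)) * X := by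
        field_simp
        ring
      refine le_trans (le_of_eq heq) ?_
      nlinarith [mul_le_mul_of_nonneg_left hX8' (show (0:ℝ) ≤ (k:ℝ)*(h:ℝ) by positivity),
        mul_le_mul_of_nonneg_right hkh (show (0:ℝ) ≤ (s:ℝ) by positivity)]
end

section
/- Let δ ≥ 1 and consider any instance with k districts (possibly asymmetric). Suppose that for each district d the (possibly random) representative a_d satisfies E[SW_d(a_d)] ≥ (1/δ)·max_{a∈A} SW_d(a), and let the winner w be chosen uniformly at random from the k district representatives (independently across the random choices of representatives). Then E[SW(w)] ≥ (1/(kδ))·max_{a∈A} SW(a); that is, every Uniform-of-δ-Approximate mechanism has distortion at most k·δ. -/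
/-
STATEMENT 6:
Let δ ≥ 1 and consider any instance with k districts (possibly asymmetric). Suppose that for
each district d the (possibly random) representative a_d satisfies
E[SW_d(a_d)] ≥ (1/δ)·max_{a∈A} SW_d(a), and let the winner w be chosen uniformly at random from
the k district representatives (independently across the random choices of representatives).
Then E[SW(w)] ≥ (1/(kδ))·max_{a∈A} SW(a); that is, every Uniform-of-δ-Approximate mechanism has
distortion at most k·δ.

The distribution of the representative of district d is `p d : Fin m → ℝ`, so
Pr[w = b] = (1/k)·∑_d p d b and E[SW(w)] = ∑_b (1/k)·(∑_d p d b)·SW(b).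
-/
theorem stmt6
    (k m : ℕ) (hk : 1 ≤ k) (hm : 2 ≤ m)
    (nd : Fin k → ℕ)
    (v : ∀ d : Fin k, Fin (nd d) → Fin m → ℝ)
    (hv0 : ∀ d i a, 0 ≤ v d i a)
    (hv1 : ∀ d i, ∑ a, v d i a = 1)
    (δ : ℝ) (hδ : 1 ≤ δ)
    (p : Fin k → Fin m → ℝ)
    (hp0 : ∀ d a, 0 ≤ p d a) (hp1 : ∀ d, ∑ a, p d a = 1)
    (happrox : ∀ (d : Fin k) (a : Fin m),
      (1 / δ) * (∑ i, v d i a) ≤ ∑ b, p d b * (∑ i, v d i b)) :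
    ∀ a : Fin m,
      (1 / ((k : ℝ) * δ)) * (∑ d, ∑ i, v d i a) ≤
        ∑ b, ((1 / (k : ℝ)) * ∑ d, p d b) * (∑ d', ∑ i, v d' i b) := by
  intro a
  have hk0 : (0:ℝ) < (k:ℝ) := by exact_mod_cast hk
  have key : ∀ d : Fin k,
      (1 / δ) * (∑ i, v d i a) ≤ ∑ b, p d b * (∑ d', ∑ i, v d' i b) := by
    intro d
    calc (1 / δ) * (∑ i, v d i a) ≤ ∑ b, p d b * (∑ i, v d i b) := happrox d a
      _ ≤ ∑ b, p d b * (∑ d', ∑ i, v d' i b) := by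
          refine Finset.sum_le_sum fun b _ => ?_
          refine mul_le_mul_of_nonneg_left ?_ (hp0 d b)
          exact Finset.single_le_sum (f := fun d' => ∑ i, v d' i b)
            (fun d' _ => Finset.sum_nonneg fun i _ => hv0 d' i b) (Finset.mem_univ d)
  have hsum : ∑ d, (1 / δ) * (∑ i, v d i a)
      ≤ ∑ d, ∑ b, p d b * (∑ d', ∑ i, v d' i b) :=
    Finset.sum_le_sum fun d _ => key d
  have hL : (1 / ((k : ℝ) * δ)) * (∑ d, ∑ i, v d i a)
      = (1 / (k:ℝ)) * ∑ d, (1 / δ) * (∑ i, v d i a) := by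
    rw [← Finset.mul_sum]; ring
  have hR : ∑ b, ((1 / (k : ℝ)) * ∑ d, p d b) * (∑ d', ∑ i, v d' i b)
      = (1 / (k:ℝ)) * ∑ d, ∑ b, p d b * (∑ d', ∑ i, v d' i b) := by
    have h1 : ∀ b : Fin m, ((1 / (k:ℝ)) * ∑ d, p d b) * (∑ d', ∑ i, v d' i b)
        = (1 / (k:ℝ)) * ∑ d, p d b * (∑ d', ∑ i, v d' i b) := fun b => by
      rw [mul_assoc, Finset.sum_mul]
    simp only [h1, ← Finset.mul_sum]
    rw [Finset.sum_comm]
  rw [hL, hR]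
  exact mul_le_mul_of_nonneg_left hsum (by positivity)
end

section
/- The Uniform-of-Range-Voting mechanism, which selects as the representative of each district d an alternative a_d maximizing SW_d over all alternatives, and then selects the winner uniformly at random from the k district representatives, has distortion at most k: on every unit-sum instance with k (possibly asymmetric) districts, E[SW(w)] ≥ (1/k)·max_{a∈A} SW(a). -/
/-
STATEMENT 7:
The Uniform-of-Range-Voting mechanism, which selects as the representative of each district d
an alternative a_d maximizing SW_d over all alternatives, and then selects the winner uniformly
at random from the k district representatives, has distortion at most k: on every unit-sum
instance with k (possibly asymmetric) districts, E[SW(w)] ≥ (1/k)·max_{a∈A} SW(a).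

Here E[SW(w)] = ∑_d (1/k)·SW(rep d).
-/
theorem stmt7
    (k m : ℕ) (hk : 1 ≤ k) (hm : 2 ≤ m)
    (nd : Fin k → ℕ)
    (v : ∀ d : Fin k, Fin (nd d) → Fin m → ℝ)
    (hv0 : ∀ d i a, 0 ≤ v d i a)
    (hv1 : ∀ d i, ∑ a, v d i a = 1)
    (rep : Fin k → Fin m)
    (hrep : ∀ (d : Fin k) (a : Fin m), (∑ i, v d i a) ≤ ∑ i, v d i (rep d)) :
    ∀ a : Fin m,
      (1 / (k : ℝ)) * (∑ d, ∑ i, v d i a) ≤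
        ∑ d, (1 / (k : ℝ)) * (∑ d', ∑ i, v d' i (rep d)) := by
  intro a
  rw [← Finset.mul_sum]
  apply mul_le_mul_of_nonneg_left _ (by positivity)
  apply Finset.sum_le_sum
  intro d _
  calc ∑ i, v d i a ≤ ∑ i, v d i (rep d) := hrep d a
    _ ≤ ∑ d', ∑ i, v d' i (rep d) := by
        apply Finset.single_le_sum (f := fun d' => ∑ i, v d' i (rep d))
        · intro d' _; exact Finset.sum_nonneg fun i _ => hv0 d' i _
        · exact Finset.mem_univ d
end

section
/- The Uniform-of-Plurality mechanism, which selects as the representative of each district d an alternative ranked first by at least as many agents of d as any other alternative, and then selects the winner uniformly at random from the k district representatives, has distortion at most k·m²: on every unit-sum instance with k (possibly asymmetric) districts and rankings consistent with the valuations, E[SW(w)] ≥ (1/(k·m²))·max_{a∈A} SW(a). -/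
/-
STATEMENT 9:
The Uniform-of-Plurality mechanism, which selects as the representative of each district d an
alternative ranked first by at least as many agents of d as any other alternative, and then
selects the winner uniformly at random from the k district representatives, has distortion at
most k·m²: on every unit-sum instance with k (possibly asymmetric) districts and rankings
consistent with the valuations, E[SW(w)] ≥ (1/(k·m²))·max_{a∈A} SW(a).

Rankings are position functions `σ d i : Fin m ≃ Fin m` (position 0 = top), and
E[SW(w)] = ∑_d (1/k)·SW(rep d).
-/
theorem stmt9
    (k m : ℕ) (hk : 1 ≤ k) (hm : 2 ≤ m)
    (nd : Fin k → ℕ)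
    (v : ∀ d : Fin k, Fin (nd d) → Fin m → ℝ)
    (σ : ∀ d : Fin k, Fin (nd d) → (Fin m ≃ Fin m))
    (hv0 : ∀ d i a, 0 ≤ v d i a)
    (hv1 : ∀ d i, ∑ a, v d i a = 1)
    (hcons : ∀ d i a b, σ d i a < σ d i b → v d i b ≤ v d i a)
    (rep : Fin k → Fin m)
    (hrep : ∀ (d : Fin k) (b : Fin m),
      (Finset.univ.filter fun i : Fin (nd d) => (σ d i).symm ⟨0, by omega⟩ = b).card ≤
        (Finset.univ.filter fun i : Fin (nd d) => (σ d i).symm ⟨0, by omega⟩ = rep d).card) :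
    ∀ a : Fin m,
      (1 / ((k : ℝ) * (m : ℝ) ^ 2)) * (∑ d, ∑ i, v d i a) ≤
        ∑ d, (1 / (k : ℝ)) * (∑ d', ∑ i, v d' i (rep d)) := by
  intro a
  have hm0 : (0:ℝ) < (m:ℝ) := by exact_mod_cast Nat.lt_of_lt_of_le (by norm_num) hm
  have hk0 : (0:ℝ) < (k:ℝ) := by exact_mod_cast hk
  have z : Fin m := ⟨0, by omega⟩
  -- each valuation is at most 1
  have hle1 : ∀ d i b, v d i b ≤ 1 := by
    intro d i b
    have := hv1 d i
    calc v d i b ≤ ∑ c, v d i c :=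
          Finset.single_le_sum (fun c _ => hv0 d i c) (Finset.mem_univ b)
      _ = 1 := hv1 d i
  -- key per-district bound
  have key : ∀ d : Fin k, (nd d : ℝ) ≤ (m:ℝ)^2 * ∑ i, v d i (rep d) := by
    intro d
    set T : Fin m → Finset (Fin (nd d)) :=
      fun b => Finset.univ.filter fun i => (σ d i).symm ⟨0, by omega⟩ = b with hT
    have hcard : (nd d : ℕ) ≤ m * (T (rep d)).card := by
      have hpart : ∑ b, (T b).card = nd d := by
        have h := Finset.card_eq_sum_card_fiberwise
          (s := (Finset.univ : Finset (Fin (nd d)))) (t := Finset.univ)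
          (f := fun i : Fin (nd d) => (σ d i).symm ⟨0, by omega⟩)
          (fun i _ => Finset.mem_univ _)
        simp only [Finset.card_univ, Fintype.card_fin] at h
        exact h.symm
      calc nd d = ∑ b : Fin m, (T b).card := hpart.symm
        _ ≤ ∑ _b : Fin m, (T (rep d)).card :=
            Finset.sum_le_sum (fun b _ => hrep d b)
        _ = m * (T (rep d)).card := by
            simp [Finset.sum_const, Finset.card_univ]
    have hval : ∀ i ∈ T (rep d), 1/(m:ℝ) ≤ v d i (rep d) := by
      intro i hi
      simp only [hT, Finset.mem_filter, Finset.mem_univ, true_and] at hi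
      have htop : σ d i (rep d) = ⟨0, by omega⟩ := by
        rw [← hi]; simp
      have hmax : ∀ b, v d i b ≤ v d i (rep d) := by
        intro b
        rcases eq_or_ne b (rep d) with h | h
        · subst h; exact le_refl _
        · apply hcons
          rw [htop]
          have hne : σ d i b ≠ ⟨0, by omega⟩ := by
            intro hc
            apply h
            rw [← hi, ← hc]; simp
          have : 0 < (σ d i b).val := by
            rcases Nat.eq_zero_or_pos (σ d i b).val with h0 | h0
            · exact absurd (Fin.ext h0) hne
            · exact h0
          exact this
      have h1 : (1:ℝ) ≤ (m:ℝ) * v d i (rep d) := by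
        calc (1:ℝ) = ∑ b, v d i b := (hv1 d i).symm
          _ ≤ ∑ _b : Fin m, v d i (rep d) :=
              Finset.sum_le_sum (fun b _ => hmax b)
          _ = (m:ℝ) * v d i (rep d) := by
              simp [Finset.sum_const, Finset.card_univ]
      exact (div_le_iff₀ hm0).mpr (by linarith)
    have hsum : ((T (rep d)).card : ℝ) / (m:ℝ) ≤ ∑ i, v d i (rep d) := by
      calc ((T (rep d)).card : ℝ) / (m:ℝ)
          = ∑ _i ∈ T (rep d), 1/(m:ℝ) := by
            simp [Finset.sum_const, div_eq_mul_inv]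
        _ ≤ ∑ i ∈ T (rep d), v d i (rep d) :=
            Finset.sum_le_sum hval
        _ ≤ ∑ i, v d i (rep d) :=
            Finset.sum_le_sum_of_subset_of_nonneg (Finset.subset_univ _)
              (fun i _ _ => hv0 d i (rep d))
    have hcardR : (nd d : ℝ) ≤ (m:ℝ) * (T (rep d)).card := by
      exact_mod_cast hcard
    have := mul_le_mul_of_nonneg_left hsum (le_of_lt (mul_pos hm0 hm0))
    calc (nd d : ℝ) ≤ (m:ℝ) * (T (rep d)).card := hcardR
      _ = (m:ℝ) * (m:ℝ) * (((T (rep d)).card : ℝ) / (m:ℝ)) := by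
          field_simp
      _ ≤ (m:ℝ) * (m:ℝ) * ∑ i, v d i (rep d) := this
      _ = (m:ℝ)^2 * ∑ i, v d i (rep d) := by ring
  -- SW(a) ≤ ∑ nd d
  have hSWa : (∑ d, ∑ i, v d i a) ≤ ∑ d, (nd d : ℝ) := by
    apply Finset.sum_le_sum
    intro d _
    calc ∑ i, v d i a ≤ ∑ _i : Fin (nd d), (1:ℝ) :=
          Finset.sum_le_sum (fun i _ => hle1 d i a)
      _ = (nd d : ℝ) := by simp
  -- district welfare ≤ global welfare
  have hloc : ∀ d : Fin k, (∑ i, v d i (rep d)) ≤ ∑ d', ∑ i, v d' i (rep d) := by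
    intro d
    exact Finset.single_le_sum (f := fun d' : Fin k => ∑ i, v d' i (rep d))
      (fun d' _ => Finset.sum_nonneg fun i _ => hv0 d' i (rep d)) (Finset.mem_univ d)
  have main : (∑ d, ∑ i, v d i a) ≤ (m:ℝ)^2 * ∑ d, ∑ d', ∑ i, v d' i (rep d) := by
    calc (∑ d, ∑ i, v d i a) ≤ ∑ d, (nd d : ℝ) := hSWa
      _ ≤ ∑ d, (m:ℝ)^2 * ∑ i, v d i (rep d) := Finset.sum_le_sum (fun d _ => key d)
      _ ≤ ∑ d, (m:ℝ)^2 * ∑ d', ∑ i, v d' i (rep d) :=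
          Finset.sum_le_sum (fun d _ => by
            exact mul_le_mul_of_nonneg_left (hloc d) (by positivity))
      _ = (m:ℝ)^2 * ∑ d, ∑ d', ∑ i, v d' i (rep d) := by
          rw [Finset.mul_sum]
  rw [← Finset.mul_sum]
  rw [div_mul_eq_mul_div, one_mul, div_le_iff₀ (by positivity)]
  calc (∑ d, ∑ i, v d i a) ≤ (m:ℝ)^2 * ∑ d, ∑ d', ∑ i, v d' i (rep d) := main
    _ = 1 / (k:ℝ) * (∑ d, ∑ d', ∑ i, v d' i (rep d)) * ((k:ℝ) * (m:ℝ)^2) := by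
        field_simp
end

section
/- For all integers k ≥ 2, λ ≥ 1 and m ≥ k + 1, for every distributed mechanism (with possibly randomized in-district and over-districts rules, the winner always being one of the district representatives) whose in-district rule is unanimous, and for every real c < k, there exists a unit-sum instance with m alternatives and k symmetric districts of λ agents each on which max_{a∈A} SW(a) / E[SW(winner)] > c. In particular, the distortion of every randomized distributed mechanism with a unanimous in-district rule is Ω(k). -/
/-
STATEMENT 10:
For all integers k ≥ 2, λ ≥ 1 and m ≥ k + 1, for every distributed mechanism (with possibly
randomized in-district and over-districts rules, the winner always being one of the district
representatives) whose in-district rule is unanimous, and for every real c < k, there exists a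
unit-sum instance with m alternatives and k symmetric districts of λ agents each on which
max_{a∈A} SW(a) / E[SW(winner)] > c. In particular, the distortion of every randomized
distributed mechanism with a unanimous in-district rule is Ω(k).

The randomized in-district rule is `fin`, mapping a district valuation profile to a probability
distribution over alternatives; the overall mechanism `Mech` maps an instance to the probability
distribution of the final winner. "The winner is always one of the district representatives" is
expressed by: any alternative with positive winning probability has positive probability of
being some district's representative. Unanimity: if all agents of a district rank some
alternative strictly first, it is chosen as representative with probability 1.
-/
theorem stmt10
    (k lam m : ℕ) (hk : 2 ≤ k) (hlam : 1 ≤ lam) (hm : k + 1 ≤ m)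
    (fin : (Fin lam → Fin m → ℝ) → Fin m → ℝ)
    (hfin0 : ∀ P a, 0 ≤ fin P a)
    (hfin1 : ∀ P, ∑ a, fin P a = 1)
    (hfin_unan : ∀ (P : Fin lam → Fin m → ℝ) (a : Fin m),
      (∀ (i : Fin lam) (b : Fin m), b ≠ a → P i b < P i a) → fin P a = 1)
    (Mech : (Fin k → Fin lam → Fin m → ℝ) → Fin m → ℝ)
    (hM0 : ∀ v a, 0 ≤ Mech v a)
    (hM1 : ∀ v, ∑ a, Mech v a = 1)
    (hMrep : ∀ v a, 0 < Mech v a → ∃ d, 0 < fin (v d) a)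
    (c : ℝ) (hc : c < k) :
    ∃ v : Fin k → Fin lam → Fin m → ℝ,
      (∀ d i a, 0 ≤ v d i a) ∧
      (∀ d i, ∑ a, v d i a = 1) ∧
      ∃ a : Fin m,
        (∀ b : Fin m, (∑ d, ∑ i, v d i b) ≤ (∑ d, ∑ i, v d i a)) ∧
        c < (∑ d, ∑ i, v d i a) /
            (∑ b, Mech v b * (∑ d, ∑ i, v d i b)) := by
  -- choose ε
  set ε : ℝ := min (1/6) ((k - c)/(2*((k:ℝ) + |c|) + 1)) with hεdef
  have hkc : (0:ℝ) < (k:ℝ) - c := by linarith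
  have hD0 : (0:ℝ) ≤ (k:ℝ) + |c| := by positivity
  have hden : (0:ℝ) < 2*((k:ℝ) + |c|) + 1 := by linarith
  have hε0 : 0 < ε := lt_min (by norm_num) (div_pos hkc hden)
  have hε6 : ε ≤ 1/6 := min_le_left _ _
  have hkey : c * (1/2 + ε) < (k:ℝ) * (1/2 - ε) := by
    have h2 : ε * ((k:ℝ) + c) ≤ ε * ((k:ℝ) + |c|) :=
      mul_le_mul_of_nonneg_left (by linarith [le_abs_self c]) hε0.le
    have h3 : ε * ((k:ℝ) + |c|) ≤
        ((k:ℝ) - c)/(2*((k:ℝ) + |c|) + 1) * ((k:ℝ) + |c|) :=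
      mul_le_mul_of_nonneg_right (min_le_right _ _) hD0
    have h4 : ((k:ℝ) - c)/(2*((k:ℝ) + |c|) + 1) * ((k:ℝ) + |c|) < ((k:ℝ) - c)/2 := by
      rw [div_mul_eq_mul_div, div_lt_div_iff₀ hden (by norm_num : (0:ℝ) < 2)]
      nlinarith
    have h5 : ε * ((k:ℝ) + c) < ((k:ℝ) - c)/2 := by linarith
    nlinarith
  have hkm : k < m := lt_of_lt_of_le (Nat.lt_succ_self k) hm
  set emb : Fin k → Fin m := fun d => ⟨d.1, d.2.trans hkm⟩ with hembdef
  set star : Fin m := ⟨k, hkm⟩ with hstardef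
  have hes : ∀ d, emb d ≠ star := by
    intro d h
    have : (emb d).1 = star.1 := congrArg Fin.val h
    exact absurd this (Nat.ne_of_lt d.2)
  have hse : ∀ d, star ≠ emb d := fun d => (hes d).symm
  have hinj : Function.Injective emb := by
    intro a b h
    have : (emb a).1 = (emb b).1 := congrArg Fin.val h
    exact Fin.ext this
  set v : Fin k → Fin lam → Fin m → ℝ :=
    fun d _ a => if a = emb d then 1/2 + ε else if a = star then 1/2 - ε else 0 with hvdef
  have hvnn : ∀ d i a, 0 ≤ v d i a := by
    intro d i a
    simp only [hvdef]
    split_ifs <;> linarith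
  have hvstar : ∀ d i, v d i star = 1/2 - ε := by
    intro d i
    simp [hvdef, hse d]
  have hvemb : ∀ d i, v d i (emb d) = 1/2 + ε := by
    intro d i; simp [hvdef]
  have hvsum : ∀ d i, ∑ a, v d i a = 1 := by
    intro d i
    have split : ∀ a : Fin m, v d i a =
        (if a = emb d then 1/2 + ε else 0) + (if a = star then 1/2 - ε else 0) := by
      intro a
      by_cases h1 : a = emb d
      · subst h1; simp [hvdef, hes d]
      · simp [hvdef, h1]
    rw [Finset.sum_congr rfl (fun a _ => split a), Finset.sum_add_distrib]
    simp [Finset.sum_ite_eq']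
    norm_num
  -- social welfares
  have SWstar : (∑ d, ∑ i, v d i star) = (k:ℝ) * ((lam:ℝ) * (1/2 - ε)) := by
    have h1 : ∀ d : Fin k, ∑ i : Fin lam, v d i star = (lam:ℝ) * (1/2 - ε) := by
      intro d
      rw [Finset.sum_congr rfl fun i _ => hvstar d i, Finset.sum_const, Finset.card_univ,
        Fintype.card_fin, nsmul_eq_mul]
    rw [Finset.sum_congr rfl fun d _ => h1 d, Finset.sum_const, Finset.card_univ,
      Fintype.card_fin, nsmul_eq_mul]
  have SWemb : ∀ d0, (∑ d, ∑ i, v d i (emb d0)) = (lam:ℝ) * (1/2 + ε) := by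
    intro d0
    have inner : ∀ d (i : Fin lam), v d i (emb d0) = if d = d0 then 1/2 + ε else 0 := by
      intro d i
      by_cases h : d = d0
      · subst h; simp [hvdef]
      · have h2 : emb d0 ≠ emb d := fun he => h (hinj he).symm
        simp [hvdef, h2, hes d0, h]
    have h1 : ∀ d : Fin k, ∑ i : Fin lam, v d i (emb d0)
        = (lam:ℝ) * (if d = d0 then 1/2 + ε else 0) := by
      intro d
      rw [Finset.sum_congr rfl fun i _ => inner d i, Finset.sum_const, Finset.card_univ,
        Fintype.card_fin, nsmul_eq_mul]
    rw [Finset.sum_congr rfl fun d _ => h1 d, ← Finset.mul_sum,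
      Finset.sum_ite_eq' Finset.univ d0 (fun _ => 1/2 + ε)]
    simp
  have hlamR : (1:ℝ) ≤ (lam:ℝ) := by exact_mod_cast hlam
  have hkR : (2:ℝ) ≤ (k:ℝ) := by exact_mod_cast hk
  have hlamp : (0:ℝ) < (lam:ℝ) := by linarith
  -- unanimity forces representatives
  have hunan : ∀ d, fin (v d) (emb d) = 1 := by
    intro d
    apply hfin_unan
    intro i b hb
    have hb' : v d i b ≤ 1/2 - ε := by
      simp only [hvdef]
      rw [if_neg hb]
      split_ifs <;> linarith
    rw [hvemb d i]
    linarith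
  have hzero : ∀ d b, b ≠ emb d → fin (v d) b = 0 := by
    intro d b hb
    have hsub : ∑ a ∈ ({emb d, b} : Finset (Fin m)), fin (v d) a ≤ ∑ a, fin (v d) a :=
      Finset.sum_le_sum_of_subset_of_nonneg (Finset.subset_univ _)
        (fun a _ _ => hfin0 (v d) a)
    rw [Finset.sum_pair (Ne.symm hb), hfin1, hunan d] at hsub
    have := hfin0 (v d) b
    linarith
  have hsupp : ∀ b, 0 < Mech v b → ∃ d, b = emb d := by
    intro b hb
    obtain ⟨d, hd⟩ := hMrep v b hb
    refine ⟨d, ?_⟩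
    by_contra h
    rw [hzero d b h] at hd
    exact lt_irrefl 0 hd
  -- expected welfare
  have hE : (∑ b, Mech v b * (∑ d, ∑ i, v d i b)) = (lam:ℝ) * (1/2 + ε) := by
    have term : ∀ b, Mech v b * (∑ d, ∑ i, v d i b) = Mech v b * ((lam:ℝ) * (1/2 + ε)) := by
      intro b
      rcases (hM0 v b).lt_or_eq with hpos | heq
      · obtain ⟨d0, rfl⟩ := hsupp b hpos
        rw [SWemb]
      · rw [← heq]; ring
    rw [Finset.sum_congr rfl (fun b _ => term b), ← Finset.sum_mul, hM1, one_mul]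
  have hSWpos : (0:ℝ) ≤ (k:ℝ) * ((lam:ℝ) * (1/2 - ε)) :=
    mul_nonneg (by positivity) (mul_nonneg (by positivity) (by linarith))
  refine ⟨v, hvnn, hvsum, star, ?_, ?_⟩
  · intro b
    rw [SWstar]
    by_cases h1 : b = star
    · rw [h1, SWstar]
    · by_cases h2 : ∃ d0, b = emb d0
      · obtain ⟨d0, rfl⟩ := h2
        rw [SWemb]
        have hB : 0 ≤ (lam:ℝ) * ((k:ℝ)*(1/2-ε) - (1/2+ε)) :=
          mul_nonneg (by linarith) (by nlinarith)
        nlinarith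
      · push_neg at h2
        have hz : ∀ d (i : Fin lam), v d i b = 0 := by
          intro d i
          simp [hvdef, h2 d, h1]
        rw [Finset.sum_congr rfl fun d _ =>
          Finset.sum_congr rfl fun (i : Fin lam) _ => hz d i]
        simp
        linarith
  · rw [SWstar, hE]
    rw [lt_div_iff₀ (mul_pos hlamp (by linarith))]
    have hmul := mul_lt_mul_of_pos_left hkey hlamp
    calc c * ((lam:ℝ) * (1/2 + ε)) = (lam:ℝ) * (c * (1/2 + ε)) := by ring
      _ < (lam:ℝ) * ((k:ℝ) * (1/2 - ε)) := hmul
      _ = (k:ℝ) * ((lam:ℝ) * (1/2 - ε)) := by ring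
end

section
/- Let t ≥ 1 be an integer, k = t², λ ≥ 1, and m ≥ k + t. For every distributed mechanism whose in-district rule f_in is deterministic (possibly cardinal) and whose over-districts rule f_over is possibly randomized but always outputs one of the district representatives, there exists a unit-sum instance with m alternatives and k symmetric districts of λ agents each on which max_{a∈A} SW(a) / E[SW(winner)] ≥ t = √k. In particular, the distortion of every randomized distributed mechanism with a deterministic in-district rule is Ω(√k). -/
open Finset

/-- Tournament counting lemma: if every pair of vertices has at least one direction,
some vertex has out-degree at least `t` when there are at least `2t` vertices. -/
lemma tourney_aux {m t : ℕ} (ht : 1 ≤ t) (hm : 2 * t ≤ m) (R : Fin m → Fin m → Prop)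
    [∀ a b : Fin m, Decidable (R a b)]
    (hR : ∀ a b : Fin m, a ≠ b → R a b ∨ R b a) :
    ∃ s : Fin m, t ≤ (univ.filter (fun b => b ≠ s ∧ R s b)).card := by
  by_contra hcon
  push_neg at hcon
  have hsplit : ∀ s : Fin m,
      m - 1 ≤ (univ.filter (fun b => b ≠ s ∧ R s b)).card
        + (univ.filter (fun b => b ≠ s ∧ R b s)).card := by
    intro s
    have hsub : (univ.erase s) ⊆ (univ.filter (fun b => b ≠ s ∧ R s b))
        ∪ (univ.filter (fun b => b ≠ s ∧ R b s)) := by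
      intro b hb
      have hbs : b ≠ s := Finset.ne_of_mem_erase hb
      rcases hR s b (Ne.symm hbs) with h | h
      · exact Finset.mem_union_left _ (by simp [hbs, h])
      · exact Finset.mem_union_right _ (by simp [hbs, h])
    calc m - 1 = (univ.erase s).card := by
          rw [Finset.card_erase_of_mem (mem_univ s), card_univ, Fintype.card_fin]
      _ ≤ _ := le_trans (Finset.card_le_card hsub) (Finset.card_union_le _ _)
  have hswap : ∑ s : Fin m, (univ.filter (fun b => b ≠ s ∧ R b s)).card
      = ∑ s : Fin m, (univ.filter (fun b => b ≠ s ∧ R s b)).card := by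
    simp only [Finset.card_filter]
    rw [Finset.sum_comm]
    refine Finset.sum_congr rfl fun x _ => Finset.sum_congr rfl fun y _ => ?_
    exact if_congr (and_congr_left' ne_comm) rfl rfl
  have hsum1 : ∑ s : Fin m, (m - 1) ≤
      ∑ s : Fin m, ((univ.filter (fun b => b ≠ s ∧ R s b)).card
        + (univ.filter (fun b => b ≠ s ∧ R b s)).card) :=
    Finset.sum_le_sum (fun s _ => hsplit s)
  rw [Finset.sum_add_distrib, hswap] at hsum1
  have hsum2 : ∑ s : Fin m, (univ.filter (fun b => b ≠ s ∧ R s b)).card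
      ≤ ∑ s : Fin m, (t - 1) :=
    Finset.sum_le_sum (fun s _ => by have := hcon s; omega)
  simp only [Finset.sum_const, card_univ, Fintype.card_fin, smul_eq_mul] at hsum1 hsum2
  have hkey : m * (m - 1) ≤ 2 * (m * (t - 1)) := by omega
  rw [Nat.mul_left_comm] at hkey
  have hm0 : 0 < m := by omega
  have := Nat.le_of_mul_le_mul_left hkey hm0
  omega




/-
STATEMENT 11:
Let t ≥ 1 be an integer, k = t², λ ≥ 1, and m ≥ k + t. For every distributed mechanism whose
in-district rule f_in is deterministic (possibly cardinal) and whose over-districts rule f_over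
is possibly randomized but always outputs one of the district representatives, there exists a
unit-sum instance with m alternatives and k symmetric districts of λ agents each on which
max_{a∈A} SW(a) / E[SW(winner)] ≥ t = √k. In particular, the distortion of every randomized
distributed mechanism with a deterministic in-district rule is Ω(√k).

The bound is expressed multiplicatively (t · E[SW(winner)] ≤ max SW), which also covers the
case of a winner with zero expected social welfare.
-/
theorem stmt11
    (t lam m : ℕ) (ht : 1 ≤ t) (hlam : 1 ≤ lam) (hm : t * t + t ≤ m)
    (fin : (Fin lam → Fin m → ℝ) → Fin m)
    (fover : (Fin (t * t) → Fin m) → Fin m → ℝ)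
    (hfover0 : ∀ reps a, 0 ≤ fover reps a)
    (hfover1 : ∀ reps, ∑ a, fover reps a = 1)
    (hfover_rep : ∀ reps a, 0 < fover reps a → ∃ d, reps d = a) :
    ∃ v : Fin (t * t) → Fin lam → Fin m → ℝ,
      (∀ d i a, 0 ≤ v d i a) ∧
      (∀ d i, ∑ a, v d i a = 1) ∧
      ∃ a : Fin m,
        (∀ b : Fin m, (∑ d, ∑ i, v d i b) ≤ (∑ d, ∑ i, v d i a)) ∧
        (t : ℝ) * (∑ b, fover (fun d => fin (v d)) b * (∑ d, ∑ i, v d i b)) ≤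
          (∑ d, ∑ i, v d i a) := by
  classical
  have ht' : 0 < t := ht
  -- the symmetric pair profile
  set prof : Fin m → Fin m → (Fin lam → Fin m → ℝ) :=
    fun a b => fun _ c => if c = a ∨ c = b then (1/2 : ℝ) else 0 with hprofdef
  have hprofsym : ∀ a b, prof a b = prof b a := by
    intro a b; funext i c; simp [prof, or_comm]
  -- tournament relation : a "beats" b if f_in does not choose a from the pair profile
  have h2t : 2 * t ≤ m := le_trans (by nlinarith) hm
  obtain ⟨s, hs⟩ := tourney_aux ht h2t (fun a b => fin (prof a b) ≠ a)
    (by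
      intro a b hab
      by_contra hcon
      push_neg at hcon
      obtain ⟨h1, h2⟩ := hcon
      have h1' : fin (prof a b) = a := h1
      have h2' : fin (prof b a) = b := h2
      rw [hprofsym a b] at h1'
      exact hab (h1'.symm.trans h2'))
  -- extract t garbage alternatives beaten by s
  obtain ⟨S, hSsub, hScard⟩ := Finset.exists_subset_card_eq hs
  set g : Fin t → Fin m := fun j => ((S.orderIsoOfFin hScard j : S) : Fin m) with hgdef
  have ginj : Function.Injective g := fun a b hab =>
    (S.orderIsoOfFin hScard).injective (Subtype.ext hab)
  have hgprop : ∀ j : Fin t, g j ≠ s ∧ fin (prof s (g j)) ≠ s := by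
    intro j
    have h1 : (g j) ∈ S := (S.orderIsoOfFin hScard j).2
    have h2 := hSsub h1
    exact (Finset.mem_filter.mp h2).2
  -- districts grouping
  set grp : Fin (t * t) → Fin t :=
    fun d => ⟨d.1 / t, Nat.div_lt_of_lt_mul d.2⟩ with hgrpdef
  have cardgrp : ∀ j : Fin t,
      (univ.filter (fun d : Fin (t * t) => grp d = j)).card ≤ t := by
    intro j
    have hle : (univ.filter (fun d : Fin (t * t) => grp d = j)).card
        ≤ (univ : Finset (Fin t)).card := by
      apply Finset.card_le_card_of_injOn (fun d => (⟨d.1 % t, Nat.mod_lt _ ht'⟩ : Fin t))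
      · intro d _; exact mem_univ _
      · intro d1 h1 d2 h2 hmod
        have e1 : d1.1 / t = j.1 := congrArg Fin.val (Finset.mem_filter.mp h1).2
        have e2 : d2.1 / t = j.1 := congrArg Fin.val (Finset.mem_filter.mp h2).2
        have emod : d1.1 % t = d2.1 % t := congrArg Fin.val hmod
        have k1 := Nat.div_add_mod d1.1 t
        have k2 := Nat.div_add_mod d2.1 t
        rw [e1] at k1
        rw [e2] at k2
        apply Fin.ext
        omega
    rw [card_univ, Fintype.card_fin] at hle
    exact hle
  -- the valuation profile
  set v : Fin (t * t) → Fin lam → Fin m → ℝ :=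
    fun d => prof s (g (grp d)) with hvdef
  -- social welfare of s
  have hSWs : (∑ d, ∑ i : Fin lam, v d i s) = (t : ℝ) * t * lam / 2 := by
    have hval : ∀ d (i : Fin lam), v d i s = 1/2 := by
      intro d i; simp [v, prof]
    calc (∑ d, ∑ i : Fin lam, v d i s)
        = ∑ d : Fin (t * t), ∑ i : Fin lam, (1/2 : ℝ) :=
          Finset.sum_congr rfl fun d _ => Finset.sum_congr rfl fun i _ => hval d i
      _ = (t : ℝ) * t * lam / 2 := by
          simp [Finset.sum_const, card_univ]
          push_cast
          ring
  -- social welfare of other alternatives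
  have hSWb : ∀ b : Fin m, b ≠ s → (∑ d, ∑ i : Fin lam, v d i b) ≤ (t : ℝ) * lam / 2 := by
    intro b hb
    have hcount : (univ.filter (fun d : Fin (t * t) => b = g (grp d))).card ≤ t := by
      rcases Finset.eq_empty_or_nonempty
        (univ.filter (fun d : Fin (t * t) => b = g (grp d))) with he | ⟨d0, hd0⟩
      · rw [he]; simp
      · have hb0 : b = g (grp d0) := (Finset.mem_filter.mp hd0).2
        have hsub : (univ.filter (fun d : Fin (t * t) => b = g (grp d)))
            ⊆ (univ.filter (fun d : Fin (t * t) => grp d = grp d0)) := by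
          intro d hd
          have h2 : b = g (grp d) := (Finset.mem_filter.mp hd).2
          simp only [mem_filter, mem_univ, true_and]
          exact ginj (h2.symm.trans hb0)
        exact le_trans (Finset.card_le_card hsub) (cardgrp _)
    have hval : ∀ d (i : Fin lam), v d i b = (if b = g (grp d) then (1/2 : ℝ) else 0) := by
      intro d i; simp [v, prof, hb]
    calc (∑ d, ∑ i : Fin lam, v d i b)
        = ∑ d : Fin (t * t), ∑ i : Fin lam, (if b = g (grp d) then (1/2 : ℝ) else 0) :=
          Finset.sum_congr rfl fun d _ => Finset.sum_congr rfl fun i _ => hval d i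
      _ = (lam : ℝ) * ∑ d : Fin (t * t), (if b = g (grp d) then (1/2 : ℝ) else 0) := by
          rw [Finset.mul_sum]
          refine Finset.sum_congr rfl fun d _ => ?_
          simp [Finset.sum_const, card_univ, mul_comm]
      _ = (lam : ℝ) * (((univ.filter (fun d : Fin (t * t) => b = g (grp d))).card : ℝ) * (1/2)) := by
          rw [← Finset.sum_filter, Finset.sum_const, nsmul_eq_mul]
      _ ≤ (t : ℝ) * lam / 2 := by
          have hc : ((univ.filter (fun d : Fin (t * t) => b = g (grp d))).card : ℝ) ≤ t := by
            exact_mod_cast hcount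
          have hl : (0 : ℝ) ≤ (lam : ℝ) := Nat.cast_nonneg lam
          nlinarith
  refine ⟨v, ?_, ?_, s, ?_, ?_⟩
  · intro d i a
    simp only [v, prof]
    split <;> norm_num
  · intro d i
    have hne : s ≠ g (grp d) := Ne.symm (hgprop (grp d)).1
    calc ∑ c, v d i c
        = ∑ c, ((if c = s then (1/2 : ℝ) else 0) + (if c = g (grp d) then (1/2 : ℝ) else 0)) := by
          refine Finset.sum_congr rfl fun c _ => ?_
          by_cases h1 : c = s <;> by_cases h2 : c = g (grp d)
          · exact absurd (h1.symm.trans h2) hne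
          · simp [v, prof, h1, h2, hne]
          · simp [v, prof, h1, h2, (hgprop (grp d)).1]
          · simp [v, prof, h1, h2]
      _ = 1 := by
          rw [Finset.sum_add_distrib]
          simp [Finset.sum_ite_eq']
          norm_num
  · -- s maximizes social welfare
    intro b
    by_cases hb : b = s
    · rw [hb]
    · rw [hSWs]
      refine le_trans (hSWb b hb) ?_
      have hl : (0 : ℝ) ≤ (lam : ℝ) := Nat.cast_nonneg lam
      have htr : (1 : ℝ) ≤ (t : ℝ) := by exact_mod_cast ht
      have htpos : (0 : ℝ) ≤ (t : ℝ) := Nat.cast_nonneg t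
      nlinarith [mul_nonneg (mul_nonneg (sub_nonneg.mpr htr) htpos) hl]
  · -- the distortion bound
    rw [hSWs]
    have hrep_ne : ∀ b : Fin m, 0 < fover (fun d => fin (v d)) b → b ≠ s := by
      intro b hb
      obtain ⟨d, hd⟩ := hfover_rep _ b hb
      rw [← hd]
      exact (hgprop (grp d)).2
    have hbound : (∑ b, fover (fun d => fin (v d)) b * (∑ d, ∑ i, v d i b))
        ≤ (t : ℝ) * lam / 2 := by
      calc (∑ b, fover (fun d => fin (v d)) b * (∑ d, ∑ i, v d i b))
          ≤ ∑ b, fover (fun d => fin (v d)) b * ((t : ℝ) * lam / 2) := by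
            refine Finset.sum_le_sum fun b _ => ?_
            rcases lt_or_eq_of_le (hfover0 (fun d => fin (v d)) b) with h | h
            · exact mul_le_mul_of_nonneg_left (hSWb b (hrep_ne b h)) (le_of_lt h)
            · rw [← h]; simp
        _ = (t : ℝ) * lam / 2 := by
            rw [← Finset.sum_mul, hfover1, one_mul]
    have htpos : (0 : ℝ) ≤ (t : ℝ) := Nat.cast_nonneg t
    calc (t : ℝ) * (∑ b, fover (fun d => fin (v d)) b * (∑ d, ∑ i, v d i b))
        ≤ (t : ℝ) * ((t : ℝ) * lam / 2) := mul_le_mul_of_nonneg_left hbound htpos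
      _ = (t : ℝ) * t * lam / 2 := by ring
end

section
/- Let k ≥ 1, let m be even with m/2 ≥ k and with 2λ/m a positive integer, and fix a linear order ≻ on the set A of m alternatives. Consider any distributed mechanism whose in-district rule f_in is deterministic and ordinal and always selects, from each district, the ≻-greatest among the alternatives ranked first by at least one agent of the district, and whose over-districts rule f_over is an arbitrary (possibly randomized) rule outputting one of the district representatives. Then there exists a unit-sum instance with k symmetric districts of λ agents each on which max_{a∈A} SW(a) / E[SW(winner)] ≥ k·m·(m-2)/4. In particular, the distortion of any ordinal distributed mechanism with a deterministic in-district rule that breaks ties according to a fixed ordering of the alternatives is Ω(km²). -/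
/-
STATEMENT 12:
Let k ≥ 1, let m be even with m/2 ≥ k and with 2λ/m a positive integer (we write m = 2h and
λ = h·s with k ≤ h, s ≥ 1), and fix a linear order ≻ on the set A of m alternatives (encoded by
an injective priority function `pri`; smaller priority = ≻-greater). Consider any distributed
mechanism whose in-district rule f_in is deterministic and ordinal and always selects, from each
district, the ≻-greatest among the alternatives ranked first by at least one agent of the
district, and whose over-districts rule f_over is an arbitrary (possibly randomized) rule
outputting one of the district representatives. Then there exists a unit-sum instance with k
symmetric districts of λ agents each on which
max_{a∈A} SW(a) / E[SW(winner)] ≥ k·m·(m-2)/4. In particular, the distortion of any ordinal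
distributed mechanism with a deterministic in-district rule that breaks ties according to a
fixed ordering of the alternatives is Ω(km²).
-/
namespace Stmt12Aux

def gdec (h k d j : ℕ) : ℕ :=
  if j = d then 0
  else if j < d then 2*h - 1 - j
  else if j < k then 2*h - j
  else j - k + 1

def ggood (h j : ℕ) : ℕ := if j = 2*h - 1 then 0 else j + 1

def gg (h k s d i j : ℕ) : ℕ := if i < s then gdec h k d j else ggood h j

lemma gg_lt {h k d : ℕ} (s i : ℕ) (hk : 1 ≤ k) (hkh : k ≤ h) (hd : d < k)
    {j : ℕ} (hj : j < 2*h) : gg h k s d i j < 2*h := by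
  unfold gg gdec ggood; split_ifs <;> omega

lemma gg_inj {h k d : ℕ} (s i : ℕ) (hk : 1 ≤ k) (hkh : k ≤ h) (hd : d < k)
    {j1 j2 : ℕ} (hj1 : j1 < 2*h) (hj2 : j2 < 2*h)
    (heq : gg h k s d i j1 = gg h k s d i j2) : j1 = j2 := by
  unfold gg gdec ggood at heq; split_ifs at heq <;> omega

lemma sum_fin_ite (n t : ℕ) (ht : t ≤ n) (c e : ℝ) :
    ∑ i : Fin n, (if (i : ℕ) < t then c else e) = (t : ℝ) * c + ((n - t : ℕ) : ℝ) * e := by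
  rw [show (∑ i : Fin n, (if (i : ℕ) < t then c else e))
      = ∑ j ∈ Finset.range n, (if j < t then c else e) from
    Fin.sum_univ_eq_sum_range (fun j => if j < t then c else e) n]
  rw [Finset.sum_ite, Finset.sum_const, Finset.sum_const, nsmul_eq_mul, nsmul_eq_mul]
  have e1 : (Finset.range n).filter (fun j => j < t) = Finset.range t := by
    ext j; simp only [Finset.mem_filter, Finset.mem_range]; omega
  have e2 : (Finset.range n).filter (fun j => ¬ j < t) = Finset.Ico t n := by
    ext j; simp only [Finset.mem_filter, Finset.mem_range, Finset.mem_Ico]; omega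
  rw [e1, e2, Finset.card_range, Nat.card_Ico]

end Stmt12Aux

theorem stmt12
    (k h s : ℕ) (hk : 1 ≤ k) (hkh : k ≤ h) (hs : 1 ≤ s)
    (pri : Fin (2 * h) → Fin (2 * h)) (hpri : Function.Injective pri)
    (fin : (Fin (h * s) → (Fin (2 * h) ≃ Fin (2 * h))) → Fin (2 * h))
    (hfin : ∀ (P : Fin (h * s) → (Fin (2 * h) ≃ Fin (2 * h))) (a : Fin (2 * h)),
      (∃ i, ∀ b, b ≠ a → P i a < P i b) →
      (∀ b : Fin (2 * h), (∃ i, ∀ c, c ≠ b → P i b < P i c) → pri a ≤ pri b) →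
      fin P = a)
    (fover : (Fin k → Fin (2 * h)) → Fin (2 * h) → ℝ)
    (hfover0 : ∀ reps a, 0 ≤ fover reps a)
    (hfover1 : ∀ reps, ∑ a, fover reps a = 1)
    (hfover_rep : ∀ reps a, 0 < fover reps a → ∃ d, reps d = a) :
    ∃ (σ : Fin k → Fin (h * s) → (Fin (2 * h) ≃ Fin (2 * h)))
      (v : Fin k → Fin (h * s) → Fin (2 * h) → ℝ),
      (∀ d i a, 0 ≤ v d i a) ∧
      (∀ d i, ∑ a, v d i a = 1) ∧
      (∀ d i a b, σ d i a < σ d i b → v d i b ≤ v d i a) ∧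
      ∃ a : Fin (2 * h),
        (∀ b, (∑ d, ∑ i, v d i b) ≤ (∑ d, ∑ i, v d i a)) ∧
        (k : ℝ) * (2 * (h : ℝ)) * (2 * (h : ℝ) - 2) / 4 *
            (∑ b, fover (fun d => fin (σ d)) b * (∑ d, ∑ i, v d i b)) ≤
          (∑ d, ∑ i, v d i a) := by
  classical
  have h1 : 1 ≤ h := hk.trans hkh
  have hsle : s ≤ h * s := Nat.le_mul_of_pos_left s h1
  have priBij : Function.Bijective pri := Finite.injective_iff_bijective.mp hpri
  obtain ⟨astar, hastar⟩ := priBij.2 ⟨2*h - 1, by omega⟩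
  have hpa : (pri astar : ℕ) = 2*h - 1 := by rw [hastar]
  have hxex : ∀ d : Fin k, ∃ a : Fin (2*h), (pri a : ℕ) = d.val := by
    intro d
    obtain ⟨a, ha⟩ := priBij.2 ⟨d.val, by have := d.isLt; omega⟩
    exact ⟨a, by rw [ha]⟩
  choose x hx using hxex
  set F : Fin k → Fin (h*s) → Fin (2*h) → Fin (2*h) :=
    fun d i a => ⟨Stmt12Aux.gg h k s d.val i.val (pri a).val,
      Stmt12Aux.gg_lt s i.val hk hkh d.isLt (pri a).isLt⟩ with hF
  have Finj : ∀ d i, Function.Injective (F d i) := by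
    intro d i a b hab
    apply hpri
    apply Fin.ext
    exact Stmt12Aux.gg_inj s i.val hk hkh d.isLt (pri a).isLt (pri b).isLt
      (congrArg Fin.val hab)
  set σ : Fin k → Fin (h*s) → (Fin (2*h) ≃ Fin (2*h)) :=
    fun d i => Equiv.ofBijective (F d i) (Finite.injective_iff_bijective.mp (Finj d i)) with hσ
  have hσval : ∀ d i a, σ d i a = F d i a := fun d i a => rfl
  have hT0 : 0 < 2*h - k + 1 := by omega
  set c : ℝ := ((2*h - k + 1 : ℕ) : ℝ)⁻¹ with hc
  have hc0 : 0 < c := by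
    rw [hc]; exact inv_pos.mpr (by exact_mod_cast hT0)
  have hcT : c * ((2*h - k + 1 : ℕ) : ℝ) = 1 :=
    inv_mul_cancel₀ (by exact_mod_cast hT0.ne')
  set v : Fin k → Fin (h*s) → Fin (2*h) → ℝ :=
    fun d i a => if (i : ℕ) < s then (if ((F d i a) : ℕ) ≤ 2*h - k then c else 0)
      else (if a = astar then 1 else 0) with hv
  -- nonnegativity
  have hvnn : ∀ d i a, 0 ≤ v d i a := by
    intro d i a
    simp only [hv]
    split_ifs <;> first | exact hc0.le | norm_num
  -- unit sum
  have hvsum : ∀ d i, ∑ a, v d i a = 1 := by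
    intro d i
    by_cases hi : (i : ℕ) < s
    · have key : ∑ a, v d i a = ∑ b : Fin (2*h), (if (b : ℕ) < 2*h - k + 1 then c else 0) := by
        rw [← Equiv.sum_comp (σ d i) (fun b : Fin (2*h) => if (b : ℕ) < 2*h-k+1 then c else 0)]
        apply Finset.sum_congr rfl
        intro a _
        rw [hσval]
        simp only [hv, hi, if_true]
        exact if_congr (by omega) rfl rfl
      rw [key, Stmt12Aux.sum_fin_ite (2*h) (2*h-k+1) (by omega) c 0]
      rw [mul_zero, add_zero, mul_comm]
      exact hcT
    · simp only [hv, hi, if_false]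
      rw [Finset.sum_ite_eq' Finset.univ astar (fun _ => (1:ℝ))]
      simp
  -- monotone consistency
  have hvmono : ∀ d i a b, σ d i a < σ d i b → v d i b ≤ v d i a := by
    intro d i a b hab
    have hab' : ((F d i a) : ℕ) < ((F d i b) : ℕ) := by
      have := Fin.lt_def.mp hab
      rwa [hσval, hσval] at this
    by_cases hi : (i : ℕ) < s
    · simp only [hv, hi, if_true]
      have hab2 : Stmt12Aux.gg h k s d.val i.val (pri a).val <
          Stmt12Aux.gg h k s d.val i.val (pri b).val := hab'
      split_ifs with hb ha ha
      · exact le_rfl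
      · exfalso; omega
      · exact hc0.le
      · exact le_rfl
    · simp only [hv, hi, if_false]
      by_cases hb : b = astar
      · exfalso
        have hb0 : ((F d i b) : ℕ) = 0 := by
          show Stmt12Aux.gg h k s d.val i.val (pri b).val = 0
          rw [hb, hpa]
          unfold Stmt12Aux.gg Stmt12Aux.gdec Stmt12Aux.ggood
          split_ifs <;> omega
        omega
      · rw [if_neg hb]
        split_ifs <;> norm_num
  -- in-district winner is x d
  have hFxd : ∀ (d : Fin k) (i : Fin (h*s)), (i : ℕ) < s → ((F d i (x d)) : ℕ) = 0 := by
    intro d i hi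
    show Stmt12Aux.gg h k s d.val i.val (pri (x d)).val = 0
    rw [hx d]
    unfold Stmt12Aux.gg Stmt12Aux.gdec
    split_ifs <;> omega
  have hrep : ∀ d, fin (σ d) = x d := by
    intro d
    apply hfin (σ d) (x d)
    · refine ⟨⟨0, Nat.mul_pos (by omega) (by omega)⟩, fun b hb => ?_⟩
      set i0 : Fin (h*s) := ⟨0, Nat.mul_pos (by omega) (by omega)⟩ with hi0
      have hi0s : (i0 : ℕ) < s := hs
      rw [Fin.lt_def, hσval, hσval, hFxd d i0 hi0s]
      have hne : ((F d i0 b) : ℕ) ≠ 0 := by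
        intro e
        apply hb
        apply Finj d i0
        apply Fin.ext
        rw [e, hFxd d i0 hi0s]
      omega
    · rintro b ⟨i, hi⟩
      have hb0 : ((F d i b) : ℕ) = 0 := by
        by_contra hne
        obtain ⟨z, hz⟩ := (Finite.injective_iff_bijective.mp (Finj d i)).2 ⟨0, by omega⟩
        have hzb : z ≠ b := by
          intro e; apply hne; rw [← e, hz]
        have hlt := Fin.lt_def.mp (hi z hzb)
        rw [hσval, hσval, hz] at hlt
        simp at hlt
      by_cases hi' : (i : ℕ) < s
      · have hpb : (pri b : ℕ) = d.val := by
          have hgg : Stmt12Aux.gg h k s d.val i.val (pri b).val = 0 := hb0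
          have hplt := (pri b).isLt
          have hdlt := d.isLt
          unfold Stmt12Aux.gg Stmt12Aux.gdec Stmt12Aux.ggood at hgg
          split_ifs at hgg <;> omega
        rw [Fin.le_def, hx d, hpb]
      · have hpb : (pri b : ℕ) = 2*h - 1 := by
          have hgg : Stmt12Aux.gg h k s d.val i.val (pri b).val = 0 := hb0
          have hplt := (pri b).isLt
          unfold Stmt12Aux.gg Stmt12Aux.gdec Stmt12Aux.ggood at hgg
          split_ifs at hgg <;> omega
        rw [Fin.le_def, hx d, hpb]
        have := d.isLt; omega
  -- value of astar for each agent
  have hAval : ∀ (d : Fin k) (i : Fin (h*s)), (i : ℕ) < s → ((F d i astar) : ℕ) = 2*h - k := by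
    intro d i hi
    show Stmt12Aux.gg h k s d.val i.val (pri astar).val = 2*h - k
    rw [hpa]
    have := d.isLt
    unfold Stmt12Aux.gg Stmt12Aux.gdec Stmt12Aux.ggood
    split_ifs <;> omega
  have hvast : ∀ d i, v d i astar = if (i : ℕ) < s then c else 1 := by
    intro d i
    by_cases hi : (i : ℕ) < s
    · have hAv2 : Stmt12Aux.gg h k s d.val i.val (pri astar).val = 2*h - k := hAval d i hi
      simp only [hv, hi, if_true]
      rw [if_pos hAv2.le]
    · simp only [hv, hi, if_false]
      simp
  have hvle : ∀ d i b, v d i b ≤ v d i astar := by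
    intro d i b
    rw [hvast]
    by_cases hi : (i : ℕ) < s
    · simp only [hv, hi, if_true]
      split_ifs <;> simp [hc0.le]
    · simp only [hv, hi, if_false]
      split_ifs <;> norm_num
  -- social welfare of x d
  have hSWx : ∀ d : Fin k, (∑ d', ∑ i, v d' i (x d)) ≤ (s : ℝ) * c := by
    intro d
    have hbound : ∀ (d' : Fin k) (i : Fin (h*s)),
        v d' i (x d) ≤ (if d' = d then (if (i : ℕ) < s then c else 0) else 0) := by
      intro d' i
      by_cases hi : (i : ℕ) < s
      · by_cases hdd : d' = d
        · simp only [hv, hi, if_true, hdd, if_pos rfl]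
          split_ifs <;> simp [hc0.le]
        · have hval : ((F d' i (x d)) : ℕ) = Stmt12Aux.gdec h k d'.val d.val := by
            show Stmt12Aux.gg h k s d'.val i.val (pri (x d)).val = _
            rw [hx d]
            unfold Stmt12Aux.gg
            rw [if_pos hi]
          have hgt : ¬ ((F d' i (x d)) : ℕ) ≤ 2*h - k := by
            rw [hval]
            unfold Stmt12Aux.gdec
            have hd := d.isLt
            have hd' := d'.isLt
            have hne : d.val ≠ d'.val := fun e => hdd (Fin.ext e.symm)
            split_ifs <;> omega
          simp [hv, hi, hgt, hdd]
      · have hne : x d ≠ astar := by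
          intro e
          have hxd := hx d
          rw [e, hpa] at hxd
          have := d.isLt; omega
        simp [hv, hi, hne]
    have hin : ∀ d' : Fin k,
        (∑ i : Fin (h*s), (if d' = d then (if (i : ℕ) < s then c else 0) else 0))
          = (if d' = d then (s : ℝ) * c else 0) := by
      intro d'
      by_cases hdd : d' = d
      · simp only [hdd, if_true, eq_self_iff_true]
        rw [Stmt12Aux.sum_fin_ite (h*s) s hsle c 0, mul_zero, add_zero]
      · simp [hdd]
    calc ∑ d', ∑ i, v d' i (x d)
        ≤ ∑ d' : Fin k, ∑ i : Fin (h*s), (if d' = d then (if (i : ℕ) < s then c else 0) else 0) :=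
          Finset.sum_le_sum (fun d' _ => Finset.sum_le_sum (fun i _ => hbound d' i))
      _ = ∑ d' : Fin k, (if d' = d then (s : ℝ) * c else 0) :=
          Finset.sum_congr rfl (fun d' _ => hin d')
      _ = (s : ℝ) * c := by simp
  -- social welfare of astar
  have hinner : ∀ d, ∑ i, v d i astar = (s : ℝ) * c + ((h*s - s : ℕ) : ℝ) := by
    intro d
    rw [Finset.sum_congr rfl (fun i _ => hvast d i)]
    rw [Stmt12Aux.sum_fin_ite (h*s) s hsle c 1, mul_one]
  have hSWast : (∑ d, ∑ i, v d i astar) = (k : ℝ) * ((s : ℝ) * c + ((h*s - s : ℕ) : ℝ)) := by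
    rw [Finset.sum_congr rfl (fun d _ => hinner d), Finset.sum_const, Finset.card_univ,
      Fintype.card_fin, nsmul_eq_mul]
  refine ⟨σ, v, hvnn, hvsum, hvmono, astar,
    fun b => Finset.sum_le_sum fun d _ => Finset.sum_le_sum fun i _ => hvle d i b, ?_⟩
  have hreps : (fun d => fin (σ d)) = x := funext hrep
  rw [hreps]
  have hE : (∑ b, fover x b * (∑ d, ∑ i, v d i b)) ≤ (s : ℝ) * c := by
    calc ∑ b, fover x b * (∑ d, ∑ i, v d i b)
        ≤ ∑ b, fover x b * ((s : ℝ) * c) := by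
          apply Finset.sum_le_sum
          intro b _
          rcases eq_or_lt_of_le (hfover0 x b) with h0 | h0
          · rw [← h0, zero_mul, zero_mul]
          · obtain ⟨d, hd⟩ := hfover_rep x b h0
            exact mul_le_mul_of_nonneg_left (hd ▸ hSWx d) h0.le
      _ = (s : ℝ) * c := by rw [← Finset.sum_mul, hfover1, one_mul]
  have h1' : (1 : ℝ) ≤ (h : ℝ) := by exact_mod_cast h1
  have hC0 : (0 : ℝ) ≤ (k : ℝ) * (2*(h : ℝ)) * (2*(h : ℝ) - 2) / 4 := by
    apply div_nonneg _ (by norm_num)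
    apply mul_nonneg (by positivity)
    linarith
  have hkh' : (k : ℝ) ≤ (h : ℝ) := by exact_mod_cast hkh
  have hT2 : ((2*h - k + 1 : ℕ) : ℝ) = 2*(h : ℝ) - (k : ℝ) + 1 := by
    have hk2 : k ≤ 2*h := by omega
    push_cast [hk2]
    ring
  have hcast : ((h*s - s : ℕ) : ℝ) = ((h : ℝ) - 1) * (s : ℝ) := by
    push_cast [hsle]
    ring
  calc (k : ℝ) * (2*(h : ℝ)) * (2*(h : ℝ) - 2) / 4 * (∑ b, fover x b * (∑ d, ∑ i, v d i b))
      ≤ (k : ℝ) * (2*(h : ℝ)) * (2*(h : ℝ) - 2) / 4 * ((s : ℝ) * c) :=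
        mul_le_mul_of_nonneg_left hE hC0
    _ ≤ ∑ d, ∑ i, v d i astar := by
        rw [hSWast, hcast]
        have step : (h : ℝ) * ((h : ℝ) - 1) ≤ 1 + ((h : ℝ) - 1) * ((2*h - k + 1 : ℕ) : ℝ) := by
          rw [hT2]
          nlinarith [mul_nonneg (by linarith : (0:ℝ) ≤ (h:ℝ) - 1)
            (by linarith : (0:ℝ) ≤ (h:ℝ) - (k:ℝ) + 1)]
        have hksc : (0 : ℝ) ≤ (k : ℝ) * (s : ℝ) * c := by positivity
        calc (k : ℝ) * (2*(h : ℝ)) * (2*(h : ℝ) - 2) / 4 * ((s : ℝ) * c)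
            = ((k : ℝ) * (s : ℝ) * c) * ((h : ℝ) * ((h : ℝ) - 1)) := by ring
          _ ≤ ((k : ℝ) * (s : ℝ) * c) * (1 + ((h : ℝ) - 1) * ((2*h - k + 1 : ℕ) : ℝ)) :=
              mul_le_mul_of_nonneg_left step hksc
          _ = (k : ℝ) * ((s : ℝ) * c + ((h : ℝ) - 1) * (s : ℝ) * (c * ((2*h - k + 1 : ℕ) : ℝ))) := by
              ring
          _ = (k : ℝ) * ((s : ℝ) * c + ((h : ℝ) - 1) * (s : ℝ)) := by rw [hcT, mul_one]
end
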